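/- arXiv:2308.14086 — 3 statements merged into one kernel-verified Lean document; each statement's English description precedes it below -/
import Mathlib

section
/- Let f : ℝ × ℝ × ℝ → ℝ be of class C² and let T > 0. Let u₁, u₂ : [0,T] × ℝ → ℝ be classical solutions of u_t = u_xx + f(t, u, u_x) on the circle: each uᵢ is 2π-periodic in x, uᵢ and ∂_x uᵢ are continuous on [0,T] × ℝ, the partial derivatives ∂_t uᵢ and ∂_xx uᵢ exist and are continuous on (0,T] × ℝ, and the equation holds on (0,T] × ℝ. If u₁(T,·) = u₂(T,·), then u₁ = u₂ on all of [0,T] × ℝ. (This is the backward uniqueness underlying the injectivity of the time-T Poincaré map of the equation u_t = u_xx + f(t,u,u_x) on S¹.) -/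
set_option maxHeartbeats 1000000
open Real Set MeasureTheory intervalIntegral Filter

lemma BU_bound {s : Set ℝ} (hs : IsCompact s) (F : ℝ → ℝ → ℝ)
    (hF : ContinuousOn (fun p : ℝ × ℝ => F p.1 p.2) (s ×ˢ (univ : Set ℝ)))
    (hper : ∀ t ∈ s, ∀ x, F t (x + 2*π) = F t x) :
    ∃ M, 0 ≤ M ∧ ∀ t ∈ s, ∀ x, |F t x| ≤ M := by
  obtain ⟨M, hM⟩ := (hs.prod (isCompact_Icc (a := (0:ℝ)) (b := 2*π))).exists_bound_of_continuousOn
      (hF.mono (fun p hp => ⟨hp.1, mem_univ _⟩))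
  refine ⟨max M 0, le_max_right _ _, fun t ht x => ?_⟩
  have hper' : Function.Periodic (F t) (2*π) := fun y => hper t ht y
  have h2π : (0:ℝ) < 2*π := by positivity
  set y := x - ⌊x / (2*π)⌋ * (2*π) with hy
  have hy0 : 0 ≤ y := Int.sub_floor_div_mul_nonneg x h2π
  have hy1 : y < 2*π := Int.sub_floor_div_mul_lt x h2π
  have : F t x = F t y := (hper'.sub_int_mul_eq ⌊x / (2*π)⌋).symm
  rw [this]
  exact le_trans (hM (t, y) ⟨ht, hy0, hy1.le⟩) (le_max_left _ _)

lemma BU_lip (f : ℝ → ℝ → ℝ → ℝ)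
    (hf : ContDiff ℝ 2 fun p : ℝ × ℝ × ℝ => f p.1 p.2.1 p.2.2)
    (T M : ℝ) :
    ∃ L, 0 ≤ L ∧ ∀ t ∈ Icc (0:ℝ) T, ∀ a b c d : ℝ, |a| ≤ M → |b| ≤ M → |c| ≤ M → |d| ≤ M →
      |f t a b - f t c d| ≤ L * (|a - c| + |b - d|) := by
  set F := fun p : ℝ × ℝ × ℝ => f p.1 p.2.1 p.2.2 with hF
  have hFc : Continuous (fderiv ℝ F) := hf.continuous_fderiv two_ne_zero
  set K : Set (ℝ × ℝ × ℝ) := Icc (0:ℝ) T ×ˢ (Icc (-M) M ×ˢ Icc (-M) M) with hK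
  have hKc : IsCompact K := (isCompact_Icc).prod ((isCompact_Icc).prod isCompact_Icc)
  obtain ⟨C, hC⟩ := hKc.exists_bound_of_continuousOn hFc.continuousOn
  refine ⟨max C 0, le_max_right _ _, fun t ht a b c d ha hb hc hd => ?_⟩
  have hmem : ∀ u v : ℝ, |u| ≤ M → |v| ≤ M → (t, u, v) ∈ K := by
    intro u v hu hv
    exact ⟨ht, abs_le.1 hu, abs_le.1 hv⟩
  have hconv : Convex ℝ K := (convex_Icc _ _).prod ((convex_Icc _ _).prod (convex_Icc _ _))
  have key := hconv.norm_image_sub_le_of_norm_fderiv_le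
      (f := F) (C := max C 0)
      (fun p _ => (hf.differentiable two_ne_zero).differentiableAt)
      (fun p hp => le_trans (hC p hp) (le_max_left _ _))
      (hmem c d hc hd) (hmem a b ha hb)
  have hnorm : ‖((t,a,b) : ℝ × ℝ × ℝ) - (t,c,d)‖ ≤ |a - c| + |b - d| := by
    have : ((t,a,b) : ℝ × ℝ × ℝ) - (t,c,d) = (0, a - c, b - d) := by
      simp [Prod.ext_iff]
    rw [this, Prod.norm_def, Prod.norm_def]
    simp only [norm_zero, Real.norm_eq_abs]
    refine max_le (by positivity) (max_le ?_ ?_) <;> nlinarith [abs_nonneg (a-c), abs_nonneg (b-d)]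
  calc |f t a b - f t c d| = ‖F (t,a,b) - F (t,c,d)‖ := by simp [hF, Real.norm_eq_abs]
    _ ≤ max C 0 * ‖((t,a,b) : ℝ × ℝ × ℝ) - (t,c,d)‖ := key
    _ ≤ max C 0 * (|a - c| + |b - d|) := by
        exact mul_le_mul_of_nonneg_left hnorm (le_max_right _ _)

lemma BU_slope {T : ℝ} (v vt h : ℝ → ℝ → ℝ) {t₀ : ℝ} (ht₀ : t₀ ∈ Ioo (0:ℝ) T)
    (hv : ∀ t ∈ Ioo (0:ℝ) T, ∀ x : ℝ, HasDerivAt (fun s => v s x) (vt t x) t)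
    (hvcx : ∀ t ∈ Ioo (0:ℝ) T, Continuous (v t))
    (hvt : ContinuousOn (fun p : ℝ × ℝ => vt p.1 p.2) (Ioo 0 T ×ˢ univ))
    (hh : ContinuousOn (fun p : ℝ × ℝ => h p.1 p.2) (Ioo 0 T ×ˢ univ)) :
    Tendsto (fun t => ∫ x in (0:ℝ)..2*π, (v t x - v t₀ x) / (t - t₀) * h t x)
      (nhdsWithin t₀ {t₀}ᶜ) (nhds (∫ x in (0:ℝ)..2*π, vt t₀ x * h t₀ x)) := by
  obtain ⟨ht₀1, ht₀2⟩ := ht₀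
  set δ₀ : ℝ := min (t₀/2) ((T - t₀)/2) with hδ₀
  have hδ₀pos : 0 < δ₀ := lt_min (by linarith) (by linarith)
  have hsub : Icc (t₀ - δ₀) (t₀ + δ₀) ⊆ Ioo (0:ℝ) T := by
    intro s hs
    have h1 : δ₀ ≤ t₀/2 := min_le_left _ _
    have h2 : δ₀ ≤ (T - t₀)/2 := min_le_right _ _
    exact ⟨by linarith [hs.1], by linarith [hs.2]⟩
  set K : Set (ℝ × ℝ) := Icc (t₀ - δ₀) (t₀ + δ₀) ×ˢ Icc (0:ℝ) (2*π) with hKdef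
  have hKsub : K ⊆ Ioo (0:ℝ) T ×ˢ (univ : Set ℝ) := fun p hp => ⟨hsub hp.1, mem_univ _⟩
  have hKc : IsCompact K := isCompact_Icc.prod isCompact_Icc
  obtain ⟨B₁, hB₁⟩ := hKc.exists_bound_of_continuousOn (hvt.mono hKsub)
  obtain ⟨B₂, hB₂⟩ := hKc.exists_bound_of_continuousOn (hh.mono hKsub)
  set B : ℝ := max (max B₁ B₂) 0 with hBdef
  have hB0 : 0 ≤ B := le_max_right _ _
  have hBvt : ∀ p ∈ K, |vt p.1 p.2| ≤ B :=
    fun p hp => le_trans (hB₁ p hp) (le_trans (le_max_left _ _) (le_max_left _ _))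
  have hBh : ∀ p ∈ K, |h p.1 p.2| ≤ B :=
    fun p hp => le_trans (hB₂ p hp) (le_trans (le_max_right _ _) (le_max_left _ _))
  have hUvt := hKc.uniformContinuousOn_of_continuous (hvt.mono hKsub)
  have hUh := hKc.uniformContinuousOn_of_continuous (hh.mono hKsub)
  rw [Metric.tendsto_nhdsWithin_nhds]
  intro ε hε
  set ε' : ℝ := ε / (4*π*(B+1) + 1) with hε'def
  have hε'pos : 0 < ε' := by positivity
  obtain ⟨δ₁, hδ₁pos, hδ₁⟩ := (Metric.uniformContinuousOn_iff.1 hUvt) ε' hε'pos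
  obtain ⟨δ₂, hδ₂pos, hδ₂⟩ := (Metric.uniformContinuousOn_iff.1 hUh) ε' hε'pos
  refine ⟨min δ₀ (min δ₁ δ₂), by positivity, ?_⟩
  intro t ht hdist
  have htne : t ≠ t₀ := ht
  have hd0 : |t - t₀| < δ₀ := lt_of_lt_of_le (by rwa [Real.dist_eq] at hdist) (min_le_left _ _)
  have hd1 : |t - t₀| < δ₁ :=
    lt_of_lt_of_le (by rwa [Real.dist_eq] at hdist) (le_trans (min_le_right _ _) (min_le_left _ _))
  have hd2 : |t - t₀| < δ₂ :=
    lt_of_lt_of_le (by rwa [Real.dist_eq] at hdist) (le_trans (min_le_right _ _) (min_le_right _ _))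
  have htI : t ∈ Icc (t₀ - δ₀) (t₀ + δ₀) := by
    rw [abs_lt] at hd0; constructor <;> linarith [hd0.1, hd0.2]
  have ht₀I : t₀ ∈ Icc (t₀ - δ₀) (t₀ + δ₀) := by
    constructor <;> linarith
  have htIoo : t ∈ Ioo (0:ℝ) T := hsub htI
  have ht₀Ioo : t₀ ∈ Ioo (0:ℝ) T := ⟨ht₀1, ht₀2⟩
  -- continuity in x of the integrands
  have hcx : ∀ s ∈ Ioo (0:ℝ) T, Continuous (fun x => h s x) := by
    intro s hs
    exact hh.comp_continuous (continuous_const.prodMk continuous_id)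
      (fun x => ⟨hs, mem_univ x⟩)
  have hvtc : Continuous (fun x => vt t₀ x) :=
    hvt.comp_continuous (continuous_const.prodMk continuous_id) (fun x => ⟨ht₀Ioo, mem_univ x⟩)
  have hint1 : IntervalIntegrable (fun x => (v t x - v t₀ x) / (t - t₀) * h t x)
      MeasureTheory.volume 0 (2*π) :=
    ((((hvcx t htIoo).sub (hvcx t₀ ht₀Ioo)).div_const _).mul (hcx t htIoo)).intervalIntegrable _ _
  have hint2 : IntervalIntegrable (fun x => vt t₀ x * h t₀ x) MeasureTheory.volume 0 (2*π) :=
    (hvtc.mul (hcx t₀ ht₀Ioo)).intervalIntegrable _ _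
  rw [Real.dist_eq, ← intervalIntegral.integral_sub hint1 hint2]
  -- pointwise bound on the integrand difference
  have key : ∀ x ∈ Set.uIoc (0:ℝ) (2*π),
      |((v t x - v t₀ x) / (t - t₀) * h t x - vt t₀ x * h t₀ x)| ≤ ε' * B + B * ε' := by
    intro x hx
    have hxI : x ∈ Icc (0:ℝ) (2*π) := by
      have := Set.uIoc_of_le (by positivity : (0:ℝ) ≤ 2*π) ▸ hx
      exact ⟨this.1.le, this.2⟩
    -- MVT: the slope equals vt τ x for some τ between t and t₀
    have hlo : min t t₀ < max t t₀ := by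
      rcases lt_or_gt_of_ne htne with h | h
      · rw [min_eq_left h.le, max_eq_right h.le]; exact h
      · rw [min_eq_right h.le, max_eq_left h.le]; exact h
    have hIccsub : Icc (min t t₀) (max t t₀) ⊆ Icc (t₀ - δ₀) (t₀ + δ₀) := by
      apply Icc_subset_Icc
      · exact le_min htI.1 ht₀I.1
      · exact max_le htI.2 ht₀I.2
    obtain ⟨τ, hτ, hτeq⟩ := exists_hasDerivAt_eq_slope (fun s => v s x) (fun s => vt s x) hlo
      (fun s hs => ((hv s (hsub (hIccsub hs)) x).continuousAt).continuousWithinAt)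
      (fun s hs => hv s (hsub (hIccsub (Ioo_subset_Icc_self hs))) x)
    have hne : t - t₀ ≠ 0 := sub_ne_zero.2 htne
    have hslope : (v t x - v t₀ x) / (t - t₀) = vt τ x := by
      rcases lt_or_gt_of_ne htne with h | h
      · rw [min_eq_left h.le, max_eq_right h.le] at hτeq
        rw [hτeq, ← neg_sub (v t x) (v t₀ x), ← neg_sub t t₀, neg_div_neg_eq]
      · rw [min_eq_right h.le, max_eq_left h.le] at hτeq
        rw [hτeq]
    have hτI : τ ∈ Icc (t₀ - δ₀) (t₀ + δ₀) := hIccsub (Ioo_subset_Icc_self hτ)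
    have hτK : (τ, x) ∈ K := ⟨hτI, hxI⟩
    have ht₀K : ((t₀ : ℝ), x) ∈ K := ⟨ht₀I, hxI⟩
    have htK : ((t : ℝ), x) ∈ K := ⟨htI, hxI⟩
    have hτd : |τ - t₀| ≤ |t - t₀| := by
      rw [abs_le]
      rcases lt_or_gt_of_ne htne with h | h
      · rw [min_eq_left h.le, max_eq_right h.le] at hτ
        rw [abs_of_neg (by linarith : t - t₀ < 0)]
        constructor <;> linarith [hτ.1, hτ.2]
      · rw [min_eq_right h.le, max_eq_left h.le] at hτ
        rw [abs_of_pos (by linarith : 0 < t - t₀)]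
        constructor <;> linarith [hτ.1, hτ.2]
    have hdist1 : dist ((τ, x) : ℝ × ℝ) (t₀, x) < δ₁ := by
      rw [Prod.dist_eq]; simp only [dist_self]
      rw [max_eq_left dist_nonneg, Real.dist_eq]
      exact lt_of_le_of_lt hτd hd1
    have hdist2 : dist ((t, x) : ℝ × ℝ) (t₀, x) < δ₂ := by
      rw [Prod.dist_eq]; simp only [dist_self]
      rw [max_eq_left dist_nonneg, Real.dist_eq]
      exact hd2
    have h1 : |vt τ x - vt t₀ x| < ε' := by
      have := hδ₁ (τ, x) hτK (t₀, x) ht₀K hdist1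
      rwa [Real.dist_eq] at this
    have h2 : |h t x - h t₀ x| < ε' := by
      have := hδ₂ (t, x) htK (t₀, x) ht₀K hdist2
      rwa [Real.dist_eq] at this
    rw [hslope]
    have hre : vt τ x * h t x - vt t₀ x * h t₀ x
        = (vt τ x - vt t₀ x) * h t x + vt t₀ x * (h t x - h t₀ x) := by ring
    rw [hre]
    refine le_trans (abs_add_le _ _) ?_
    rw [abs_mul, abs_mul]
    have b1 : |vt τ x - vt t₀ x| * |h t x| ≤ ε' * B :=
      mul_le_mul h1.le (hBh (t, x) htK) (abs_nonneg _) hε'pos.le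
    have b2 : |vt t₀ x| * |h t x - h t₀ x| ≤ B * ε' :=
      mul_le_mul (hBvt (t₀, x) ht₀K) h2.le (abs_nonneg _) hB0
    linarith
  have := intervalIntegral.norm_integral_le_of_norm_le_const
      (f := fun x => (v t x - v t₀ x) / (t - t₀) * h t x - vt t₀ x * h t₀ x)
      (C := ε' * B + B * ε') (a := 0) (b := 2*π) (by
        intro x hx
        rw [Real.norm_eq_abs]
        exact key x hx)
  rw [Real.norm_eq_abs] at this
  refine lt_of_le_of_lt this ?_
  have hε'eq : ε' * (4*π*(B+1) + 1) = ε := by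
    rw [hε'def]; field_simp
  have hπ := Real.pi_pos
  have habs : |2*π - 0| = 2*π := by rw [sub_zero, abs_of_pos (by positivity)]
  rw [habs]
  nlinarith [hε'pos, hB0]

lemma BU_endgame {E D E' D' : ℝ → ℝ} {a b C₁ C₂ : ℝ} (hab : a < b)
    (hC₁ : 0 ≤ C₁) (hC₂ : 0 ≤ C₂)
    (hEcont : ContinuousOn E (Icc a b))
    (hEpos : ∀ t ∈ Ico a b, 0 < E t)
    (hD0 : ∀ t ∈ Ico a b, 0 ≤ D t)
    (hE' : ∀ t ∈ Ico a b, HasDerivAt E (E' t) t)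
    (hD' : ∀ t ∈ Ico a b, HasDerivAt D (D' t) t)
    (hN : ∀ t ∈ Ico a b, D' t * E t - D t * E' t ≤ C₁ * (E t + D t) * E t)
    (hElow : ∀ t ∈ Ico a b, -C₂ * (E t + D t) ≤ E' t) :
    0 < E b := by
  set N : ℝ → ℝ := fun t => D t / E t with hNdef
  set Nd : ℝ → ℝ := fun t => (D' t * E t - D t * E' t) / (E t)^2 with hNddef
  have hNderiv : ∀ t ∈ Ico a b, HasDerivAt N (Nd t) t := fun t ht =>
    (hD' t ht).div (hE' t ht) (hEpos t ht).ne'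
  have hNnonneg : ∀ t ∈ Ico a b, 0 ≤ N t := fun t ht =>
    div_nonneg (hD0 t ht) (hEpos t ht).le
  have hNd_le : ∀ t ∈ Ico a b, Nd t ≤ C₁ * (1 + N t) := by
    intro t ht
    have he : 0 < E t := hEpos t ht
    rw [hNddef]
    simp only
    rw [div_le_iff₀ (by positivity)]
    have := hN t ht
    simp only [hNdef]
    have key : C₁ * (1 + D t / E t) * E t ^ 2 = C₁ * (E t + D t) * E t := by
      field_simp
    rw [key]
    exact this
  -- the exponential auxiliary function bounding N
  set φ : ℝ → ℝ := fun t => (1 + N t) * Real.exp (-(C₁ * (t - a))) with hφdef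
  set φd : ℝ → ℝ := fun t =>
    Nd t * Real.exp (-(C₁ * (t - a))) + (1 + N t) * (Real.exp (-(C₁ * (t - a))) * (-C₁)) with hφddef
  have hexp : ∀ t : ℝ, HasDerivAt (fun s => Real.exp (-(C₁ * (s - a))))
      (Real.exp (-(C₁ * (t - a))) * (-C₁)) t := by
    intro t
    have h1 : HasDerivAt (fun s : ℝ => -(C₁ * (s - a))) (-C₁) t := by
      have := (((hasDerivAt_id t).sub_const a).const_mul C₁).neg
      exact this.congr_deriv (by ring)
    simpa using h1.exp
  have hφderiv : ∀ t ∈ Ico a b, HasDerivAt φ (φd t) t := fun t ht =>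
    ((hNderiv t ht).const_add 1).mul (hexp t)
  have hφd_nonpos : ∀ t ∈ Ico a b, φd t ≤ 0 := by
    intro t ht
    have h1 := hNd_le t ht
    have h2 : 0 < Real.exp (-(C₁ * (t - a))) := Real.exp_pos _
    have h3 := hNnonneg t ht
    simp only [hφddef]
    nlinarith
  set M : ℝ := (1 + N a) * Real.exp (C₁ * (b - a)) with hMdef
  have hNa : 0 ≤ N a := hNnonneg a ⟨le_refl a, hab⟩
  have hφbound : ∀ t ∈ Ico a b, 1 + N t ≤ M := by
    intro t ht
    rcases eq_or_lt_of_le ht.1 with h | h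
    · rw [hMdef, ← h]
      have : (1:ℝ) ≤ Real.exp (C₁ * (b - a)) :=
        Real.one_le_exp (mul_nonneg hC₁ (by linarith))
      nlinarith
    · have hanti : AntitoneOn φ (Icc a t) := by
        apply antitoneOn_of_deriv_nonpos (convex_Icc a t)
        · intro s hs
          have hsI : s ∈ Ico a b := ⟨hs.1, lt_of_le_of_lt hs.2 ht.2⟩
          exact ((hφderiv s hsI).continuousAt).continuousWithinAt
        · intro s hs
          rw [interior_Icc] at hs
          have hsI : s ∈ Ico a b := ⟨hs.1.le, lt_trans hs.2 ht.2⟩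
          exact (hφderiv s hsI).differentiableAt.differentiableWithinAt
        · intro s hs
          rw [interior_Icc] at hs
          have hsI : s ∈ Ico a b := ⟨hs.1.le, lt_trans hs.2 ht.2⟩
          rw [(hφderiv s hsI).deriv]
          exact hφd_nonpos s hsI
      have := hanti (left_mem_Icc.2 h.le) (right_mem_Icc.2 h.le) h.le
      -- φ t ≤ φ a = (1 + N a)
      have hφa : φ a = 1 + N a := by simp [hφdef]
      have hφt : φ t = (1 + N t) * Real.exp (-(C₁ * (t - a))) := rfl
      rw [hφa, hφt] at this
      -- so (1+N t) ≤ (1+N a) exp(C₁(t-a)) ≤ M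
      have hexp1 : Real.exp (-(C₁ * (t - a))) = (Real.exp (C₁ * (t - a)))⁻¹ := by
        rw [Real.exp_neg]
      have hepos : 0 < Real.exp (C₁ * (t - a)) := Real.exp_pos _
      have h4 : 1 + N t ≤ (1 + N a) * Real.exp (C₁ * (t - a)) := by
        rw [hexp1] at this
        have h4' := mul_le_mul_of_nonneg_right this hepos.le
        rwa [mul_assoc, inv_mul_cancel₀ hepos.ne', mul_one] at h4'
      have h5 : Real.exp (C₁ * (t - a)) ≤ Real.exp (C₁ * (b - a)) := by
        apply Real.exp_le_exp.2
        have := ht.2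
        nlinarith
      rw [hMdef]
      nlinarith [Real.exp_pos (C₁ * (t - a))]
  -- second stage: E ψ monotone
  set K : ℝ := C₂ * M with hKdef
  have hM1 : 1 ≤ M := le_trans (by linarith) (hφbound a ⟨le_refl a, hab⟩)
  have hK0 : 0 ≤ K := mul_nonneg hC₂ (by linarith)
  set ψ : ℝ → ℝ := fun t => E t * Real.exp (K * (t - a)) with hψdef
  have hexpK : ∀ t : ℝ, HasDerivAt (fun s => Real.exp (K * (s - a)))
      (Real.exp (K * (t - a)) * K) t := by
    intro t
    have h1 : HasDerivAt (fun s : ℝ => K * (s - a)) K t := by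
      have := ((hasDerivAt_id t).sub_const a).const_mul K
      simpa using this
    simpa using h1.exp
  have hψmono : MonotoneOn ψ (Icc a b) := by
    apply monotoneOn_of_deriv_nonneg (convex_Icc a b)
    · exact hEcont.mul (Continuous.continuousOn
        (Real.continuous_exp.comp (continuous_const.mul (continuous_id.sub continuous_const))))
    · intro s hs
      rw [interior_Icc] at hs
      have hsI : s ∈ Ico a b := ⟨hs.1.le, hs.2⟩
      exact ((hE' s hsI).mul (hexpK s)).differentiableAt.differentiableWithinAt
    · intro s hs
      rw [interior_Icc] at hs
      have hsI : s ∈ Ico a b := ⟨hs.1.le, hs.2⟩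
      have hψd : HasDerivAt ψ (E' s * Real.exp (K * (s - a)) + E s * (Real.exp (K * (s - a)) * K)) s :=
        (hE' s hsI).mul (hexpK s)
      rw [hψd.deriv]
      -- E' s * exp + E s * (exp * K) ≥ 0
      have he : 0 < E s := hEpos s hsI
      have hd : 0 ≤ D s := hD0 s hsI
      have hlow := hElow s hsI
      have hb := hφbound s hsI
      have hde : D s / E s * E s = D s := div_mul_cancel₀ _ he.ne'
      have hexp2 : 0 < Real.exp (K * (s - a)) := Real.exp_pos _
      -- E' s ≥ -C₂ (E + D) = -C₂ E (1 + N) ≥ -C₂ E M = -K E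
      have hEN : E s + D s = E s * (1 + N s) := by
        simp only [hNdef]
        field_simp
      have h6 : -K * E s ≤ E' s := by
        have h7 : E s * (1 + N s) ≤ E s * M := by
          apply mul_le_mul_of_nonneg_left hb he.le
        rw [hEN] at hlow
        rw [hKdef]
        nlinarith
      nlinarith [mul_le_mul_of_nonneg_right h6 hexp2.le]
  have := hψmono (left_mem_Icc.2 hab.le) (right_mem_Icc.2 hab.le) hab.le
  have hψa : ψ a = E a := by simp [hψdef]
  have hEa : 0 < E a := hEpos a ⟨le_refl a, hab⟩
  rw [hψa] at this
  have hexp3 : 0 < Real.exp (K * (b - a)) := Real.exp_pos _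
  by_contra hc
  push_neg at hc
  simp only [hψdef] at this
  nlinarith [mul_le_mul_of_nonneg_right hc hexp3.le]

lemma BU_zero (g : ℝ → ℝ) (hg : Continuous g) (h0 : ∀ x, 0 ≤ g x)
    (hper : ∀ x, g (x + 2*π) = g x)
    (hint : ∫ x in (0:ℝ)..2*π, g x = 0) : ∀ x, g x = 0 := by
  have h2π : (0:ℝ) < 2*π := by positivity
  -- first, on [0, 2π)
  have main : ∀ y ∈ Ico (0:ℝ) (2*π), g y = 0 := by
    intro y hy
    by_contra hne
    have hpos : 0 < g y := lt_of_le_of_ne (h0 y) (Ne.symm hne)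
    obtain ⟨η, hηpos, hη⟩ := Metric.continuousAt_iff.1 hg.continuousAt (g y / 2) (by linarith)
    set d : ℝ := min (y + η) (2*π) with hd
    have hyd : y < d := lt_min (by linarith) hy.2
    have hposOn : ∀ z ∈ Ioo y d, 0 < g z := by
      intro z hz
      have : dist z y < η := by
        rw [Real.dist_eq, abs_of_pos (by linarith [hz.1])]
        have := hz.2
        have : z < y + η := lt_of_lt_of_le this (min_le_left _ _)
        linarith
      have := hη this
      rw [Real.dist_eq, abs_lt] at this
      linarith [this.1]
    have hi1 : IntervalIntegrable g volume 0 y := hg.intervalIntegrable _ _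
    have hi2 : IntervalIntegrable g volume y d := hg.intervalIntegrable _ _
    have hi3 : IntervalIntegrable g volume d (2*π) := hg.intervalIntegrable _ _
    have hsplit : (∫ x in (0:ℝ)..y, g x) + (∫ x in y..d, g x) + (∫ x in d..(2*π), g x)
        = ∫ x in (0:ℝ)..2*π, g x := by
      rw [integral_add_adjacent_intervals hi1 hi2]
      exact integral_add_adjacent_intervals (hi1.trans hi2) hi3
    have p1 : 0 ≤ ∫ x in (0:ℝ)..y, g x := integral_nonneg hy.1 (fun u _ => h0 u)
    have p2 : 0 < ∫ x in y..d, g x := intervalIntegral_pos_of_pos_on hi2 hposOn hyd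
    have p3 : 0 ≤ ∫ x in d..(2*π), g x := integral_nonneg (min_le_right _ _) (fun u _ => h0 u)
    rw [hint] at hsplit
    linarith
  -- extend by periodicity
  intro x
  have hper' : Function.Periodic g (2*π) := hper
  set y := x - ⌊x / (2*π)⌋ * (2*π) with hy
  have hy0 : 0 ≤ y := Int.sub_floor_div_mul_nonneg x h2π
  have hy1 : y < 2*π := Int.sub_floor_div_mul_lt x h2π
  have : g x = g y := (hper'.sub_int_mul_eq ⌊x / (2*π)⌋).symm
  rw [this]
  exact main y ⟨hy0, hy1⟩

lemma BU_core (W Wx Wxx G : ℝ → ℝ) (L e d : ℝ) (hL : 0 ≤ L) (he : 0 < e) (hd : 0 ≤ d)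
    (hWc : Continuous W) (hWxc : Continuous Wx) (hWxxc : Continuous Wxx) (hGc : Continuous G)
    (hedef : e = ∫ x in (0:ℝ)..2*π, (W x)^2)
    (hddef : d = ∫ x in (0:ℝ)..2*π, (Wx x)^2)
    (hibp : (∫ x in (0:ℝ)..2*π, W x * Wxx x) = -d)
    (hG : ∀ x, |G x| ≤ L * (|W x| + |Wx x|)) :
    ((-2) * ∫ x in (0:ℝ)..2*π, (Wxx x + G x) * Wxx x) * e
      - d * (2 * ∫ x in (0:ℝ)..2*π, W x * (Wxx x + G x)) ≤ L^2 * (e + d) * e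
    ∧ -(2 + L^2) * (e + d) ≤ 2 * ∫ x in (0:ℝ)..2*π, W x * (Wxx x + G x) := by
  have h2π : (0:ℝ) ≤ 2*π := by positivity
  set m : ℝ := ∫ x in (0:ℝ)..2*π, (Wxx x)^2 with hm
  set γ : ℝ := ∫ x in (0:ℝ)..2*π, (G x)^2 with hγ
  set q1 : ℝ := ∫ x in (0:ℝ)..2*π, Wxx x * G x with hq1
  set q2 : ℝ := ∫ x in (0:ℝ)..2*π, W x * G x with hq2
  clear_value m γ q1 q2
  have iW2 : IntervalIntegrable (fun x => (W x)^2) volume 0 (2*π) := (hWc.pow 2).intervalIntegrable _ _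
  have iG2 : IntervalIntegrable (fun x => (G x)^2) volume 0 (2*π) := (hGc.pow 2).intervalIntegrable _ _
  have iWx2 : IntervalIntegrable (fun x => (Wx x)^2) volume 0 (2*π) := (hWxc.pow 2).intervalIntegrable _ _
  have iWxx2 : IntervalIntegrable (fun x => (Wxx x)^2) volume 0 (2*π) := (hWxxc.pow 2).intervalIntegrable _ _
  have iq1 : IntervalIntegrable (fun x => Wxx x * G x) volume 0 (2*π) := (hWxxc.mul hGc).intervalIntegrable _ _
  have iq2 : IntervalIntegrable (fun x => W x * G x) volume 0 (2*π) := (hWc.mul hGc).intervalIntegrable _ _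
  have iWWxx : IntervalIntegrable (fun x => W x * Wxx x) volume 0 (2*π) := (hWc.mul hWxxc).intervalIntegrable _ _
  -- expansion A
  have expA : (∫ x in (0:ℝ)..2*π, (Wxx x + G x) * Wxx x) = m + q1 := by
    have : ∀ x, (Wxx x + G x) * Wxx x = (Wxx x)^2 + Wxx x * G x := fun x => by ring
    rw [intervalIntegral.integral_congr (fun x _ => this x),
      intervalIntegral.integral_add iWxx2 iq1, ← hm, ← hq1]
  -- expansion B
  have expB : (∫ x in (0:ℝ)..2*π, W x * (Wxx x + G x)) = -d + q2 := by
    have : ∀ x, W x * (Wxx x + G x) = W x * Wxx x + W x * G x := fun x => by ring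
    rw [intervalIntegral.integral_congr (fun x _ => this x),
      intervalIntegral.integral_add iWWxx iq2, hibp, ← hq2]
  -- bound on γ
  have hγle : γ ≤ 2 * L^2 * (e + d) := by
    have hpt : ∀ x ∈ Icc (0:ℝ) (2*π), (G x)^2 ≤ 2*L^2*((W x)^2 + (Wx x)^2) := by
      intro x _
      have h1 := hG x
      have h3 := abs_nonneg (W x)
      have h4 := abs_nonneg (Wx x)
      nlinarith [sq_abs (G x), sq_abs (W x), sq_abs (Wx x), sq_nonneg (|W x| - |Wx x|),
        abs_nonneg (G x), sq_nonneg (L*(|W x| + |Wx x|)) ]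
    have hint : (∫ x in (0:ℝ)..2*π, (G x)^2) ≤ ∫ x in (0:ℝ)..2*π, 2*L^2*((W x)^2 + (Wx x)^2) :=
      intervalIntegral.integral_mono_on h2π iG2
      ((continuous_const.mul ((hWc.pow 2).add (hWxc.pow 2))).intervalIntegrable _ _) hpt
    have heq : (∫ x in (0:ℝ)..2*π, 2*L^2*((W x)^2 + (Wx x)^2)) = 2*L^2*(e+d) := by
      rw [intervalIntegral.integral_const_mul, intervalIntegral.integral_add iW2 iWx2,
        ← hedef, ← hddef]
    rw [heq] at hint
    rwa [hγ]
  -- the key quadratic inequality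
  set ν : ℝ := d / e with hν
  have hνe : ν * e = d := div_mul_cancel₀ _ he.ne'
  clear_value ν
  set P : ℝ → ℝ := fun x => -(Wxx x) - ν * W x with hP
  have hPc : Continuous P := (hWxxc.neg).sub (continuous_const.mul hWc)
  clear_value P
  have hI1 : (∫ x in (0:ℝ)..2*π, (-(P x)^2 + P x * G x)) ≤ γ/4 := by
    have hpt : ∀ x ∈ Icc (0:ℝ) (2*π), -(P x)^2 + P x * G x ≤ (G x)^2/4 := by
      intro x _
      nlinarith [sq_nonneg (G x - 2 * P x)]
    have hint := intervalIntegral.integral_mono_on h2π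
      (((hPc.pow 2).neg.add (hPc.mul hGc)).intervalIntegrable _ _)
      ((iG2.div_const 4)) hpt
    have heq : (∫ x in (0:ℝ)..2*π, (G x)^2/4) = γ/4 := by
      rw [intervalIntegral.integral_div, ← hγ]
    rw [heq] at hint
    exact hint
  have hI2 : (∫ x in (0:ℝ)..2*π, (-(P x)^2 + P x * G x))
      = -m + 2*ν*d - ν^2*e - q1 - ν*q2 := by
    have hptw : ∀ x, -(P x)^2 + P x * G x
        = -((Wxx x)^2) + ((-(2*ν))*(W x * Wxx x)
          + ((-(ν^2))*((W x)^2) + (-(Wxx x * G x) + (-ν)*(W x * G x)))) := by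
      intro x
      simp only [hP]
      ring
    rw [intervalIntegral.integral_congr (fun x _ => hptw x)]
    have i1 : IntervalIntegrable (fun x => -((Wxx x)^2)) volume 0 (2*π) := iWxx2.neg
    have i2 : IntervalIntegrable (fun x => (-(2*ν))*(W x * Wxx x)) volume 0 (2*π) :=
      (continuous_const.mul (hWc.mul hWxxc)).intervalIntegrable _ _
    have i3 : IntervalIntegrable (fun x => (-(ν^2))*((W x)^2)) volume 0 (2*π) :=
      (continuous_const.mul (hWc.pow 2)).intervalIntegrable _ _
    have i4 : IntervalIntegrable (fun x => -(Wxx x * G x)) volume 0 (2*π) := iq1.neg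
    have i5 : IntervalIntegrable (fun x => (-ν)*(W x * G x)) volume 0 (2*π) :=
      (continuous_const.mul (hWc.mul hGc)).intervalIntegrable _ _
    rw [intervalIntegral.integral_add i1 (i2.add (i3.add (i4.add i5))),
      intervalIntegral.integral_add i2 (i3.add (i4.add i5)),
      intervalIntegral.integral_add i3 (i4.add i5),
      intervalIntegral.integral_add i4 i5,
      intervalIntegral.integral_neg, intervalIntegral.integral_neg,
      intervalIntegral.integral_const_mul, intervalIntegral.integral_const_mul,
      intervalIntegral.integral_const_mul, hibp]
    rw [← hm, ← hedef, ← hq1, ← hq2]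
    ring
  -- combine: -m*e + d^2 - e*q1 - d*q2 ≤ e*γ/4
  have hkey : -m*e + d^2 - e*q1 - d*q2 ≤ e*γ/4 := by
    rw [hI2] at hI1
    -- multiply by e
    have := mul_le_mul_of_nonneg_left hI1 he.le
    have hν2 : ν^2 * e = ν * d := by
      rw [pow_two, mul_assoc, hνe]
    have hA : ν * d * e = d * d := by rw [mul_comm ν d, mul_assoc, hνe]
    have hB : ν^2 * e * e = d * d := by rw [hν2]; exact hA
    have hC : ν * q2 * e = d * q2 := by
      rw [mul_comm ν q2, mul_assoc, hνe, mul_comm q2 d]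
    nlinarith [this, hA, hB, hC]
  constructor
  · rw [expA, expB]
    nlinarith [hkey, mul_le_mul_of_nonneg_left hγle he.le]
  · rw [expB]
    have hq2low : -e - γ/4 ≤ q2 := by
      have hpt : ∀ x ∈ Icc (0:ℝ) (2*π), -((W x)^2) - (G x)^2/4 ≤ W x * G x := by
        intro x _
        nlinarith [sq_nonneg (G x + 2 * W x)]
      have hint : (∫ x in (0:ℝ)..2*π, (-((W x)^2) - (G x)^2/4)) ≤ ∫ x in (0:ℝ)..2*π, W x * G x :=
        intervalIntegral.integral_mono_on h2π
        (((hWc.pow 2).neg.sub ((hGc.pow 2).div_const 4)).intervalIntegrable _ _) iq2 hpt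
      have heq : (∫ x in (0:ℝ)..2*π, (-((W x)^2) - (G x)^2/4)) = -e - γ/4 := by
        have hptw : ∀ x, -((W x)^2) - (G x)^2/4 = -((W x)^2 + (G x)^2/4) := fun x => by ring
        rw [intervalIntegral.integral_congr (fun x _ => hptw x),
          intervalIntegral.integral_neg,
          intervalIntegral.integral_add iW2 (iG2.div_const 4),
          intervalIntegral.integral_div, ← hedef, ← hγ]
        ring
      rw [heq] at hint
      rwa [hq2]
    nlinarith [hq2low, hγle]

lemma BU_ibp (W Wx Wxx : ℝ → ℝ)
    (hWd : ∀ x, HasDerivAt W (Wx x) x)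
    (hWxd : ∀ x, HasDerivAt Wx (Wxx x) x)
    (hWxc : Continuous Wx) (hWxxc : Continuous Wxx)
    (pW : W (2*π) = W 0) (pWx : Wx (2*π) = Wx 0) :
    (∫ x in (0:ℝ)..2*π, W x * Wxx x) = -∫ x in (0:ℝ)..2*π, (Wx x)^2 := by
  have h := intervalIntegral.integral_mul_deriv_eq_deriv_mul (a := 0) (b := 2*π) (u := W) (u' := Wx)
    (v := Wx) (v' := Wxx) (fun x _ => hWd x) (fun x _ => hWxd x)
    (hWxc.intervalIntegrable _ _) (hWxxc.intervalIntegrable _ _)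
  rw [h, pW, pWx]
  have : (∫ x in (0:ℝ)..2*π, Wx x * Wx x) = ∫ x in (0:ℝ)..2*π, (Wx x)^2 :=
    intervalIntegral.integral_congr (fun x _ => by ring)
  rw [this]; ring

lemma BU_sym (U Ux Uxx V Vx Vxx : ℝ → ℝ)
    (hU : ∀ x, HasDerivAt U (Ux x) x) (hV : ∀ x, HasDerivAt V (Vx x) x)
    (hUx : ∀ x, HasDerivAt Ux (Uxx x) x) (hVx : ∀ x, HasDerivAt Vx (Vxx x) x)
    (cUx : Continuous Ux) (cVx : Continuous Vx) (cUxx : Continuous Uxx) (cVxx : Continuous Vxx)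
    (pU : U (2*π) = U 0) (pV : V (2*π) = V 0) (pUx : Ux (2*π) = Ux 0) (pVx : Vx (2*π) = Vx 0) :
    (∫ x in (0:ℝ)..2*π, Vxx x * U x) = ∫ x in (0:ℝ)..2*π, V x * Uxx x := by
  have h1 := intervalIntegral.integral_mul_deriv_eq_deriv_mul (a := 0) (b := 2*π) (u := U) (u' := Ux)
    (v := Vx) (v' := Vxx) (fun x _ => hU x) (fun x _ => hVx x)
    (cUx.intervalIntegrable _ _) (cVxx.intervalIntegrable _ _)
  have h2 := intervalIntegral.integral_mul_deriv_eq_deriv_mul (a := 0) (b := 2*π) (u := V) (u' := Vx)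
    (v := Ux) (v' := Uxx) (fun x _ => hV x) (fun x _ => hUx x)
    (cVx.intervalIntegrable _ _) (cUxx.intervalIntegrable _ _)
  rw [pU, pVx] at h1
  rw [pV, pUx] at h2
  have e1 : (∫ x in (0:ℝ)..2*π, Vxx x * U x) = ∫ x in (0:ℝ)..2*π, U x * Vxx x :=
    intervalIntegral.integral_congr (fun x _ => by ring)
  have e2 : (∫ x in (0:ℝ)..2*π, Ux x * Vx x) = ∫ x in (0:ℝ)..2*π, Vx x * Ux x :=
    intervalIntegral.integral_congr (fun x _ => by ring)
  rw [e1, h1, h2, e2]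
  ring

lemma BU_Econt {T : ℝ} (hT : 0 < T) (w : ℝ → ℝ → ℝ)
    (hwC : ContinuousOn (fun p : ℝ × ℝ => w p.1 p.2) (Icc 0 T ×ˢ univ)) :
    ContinuousOn (fun t => ∫ x in (0:ℝ)..2*π, (w t x)^2) (Icc 0 T) := by
  set K : Set (ℝ × ℝ) := Icc (0:ℝ) T ×ˢ Icc (0:ℝ) (2*π) with hK
  have hKc : IsCompact K := isCompact_Icc.prod isCompact_Icc
  have hKsub : K ⊆ Icc (0:ℝ) T ×ˢ univ := fun p hp => ⟨hp.1, mem_univ _⟩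
  obtain ⟨B₀, hB₀⟩ := hKc.exists_bound_of_continuousOn (hwC.mono hKsub)
  set B : ℝ := max B₀ 0 with hB
  have hB0 : 0 ≤ B := le_max_right _ _
  have hBw : ∀ p ∈ K, |w p.1 p.2| ≤ B := fun p hp => le_trans (hB₀ p hp) (le_max_left _ _)
  have hU := hKc.uniformContinuousOn_of_continuous (hwC.mono hKsub)
  intro t₀ ht₀
  rw [Metric.continuousWithinAt_iff]
  intro ε hε
  set ε' : ℝ := ε / (2*π*(2*B+1) + 1) with hε'
  have hε'pos : 0 < ε' := by positivity
  obtain ⟨δ, hδpos, hδ⟩ := (Metric.uniformContinuousOn_iff.1 hU) ε' hε'pos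
  refine ⟨δ, hδpos, ?_⟩
  intro t ht hdist
  have hint1 : IntervalIntegrable (fun x => (w t x)^2) volume 0 (2*π) := by
    have : Continuous (fun x => w t x) :=
      hwC.comp_continuous (continuous_const.prodMk continuous_id) (fun x => ⟨ht, mem_univ x⟩)
    exact (this.pow 2).intervalIntegrable _ _
  have hint0 : IntervalIntegrable (fun x => (w t₀ x)^2) volume 0 (2*π) := by
    have : Continuous (fun x => w t₀ x) :=
      hwC.comp_continuous (continuous_const.prodMk continuous_id) (fun x => ⟨ht₀, mem_univ x⟩)
    exact (this.pow 2).intervalIntegrable _ _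
  rw [Real.dist_eq, ← intervalIntegral.integral_sub hint1 hint0]
  have key : ∀ x ∈ Set.uIoc (0:ℝ) (2*π), |(w t x)^2 - (w t₀ x)^2| ≤ ε' * (2*B) := by
    intro x hx
    have hxI : x ∈ Icc (0:ℝ) (2*π) := by
      have := Set.uIoc_of_le (by positivity : (0:ℝ) ≤ 2*π) ▸ hx
      exact ⟨this.1.le, this.2⟩
    have htK : ((t:ℝ), x) ∈ K := ⟨ht, hxI⟩
    have ht₀K : ((t₀:ℝ), x) ∈ K := ⟨ht₀, hxI⟩
    have hdd : dist ((t, x) : ℝ × ℝ) (t₀, x) < δ := by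
      rw [Prod.dist_eq]; simp only [dist_self]
      rw [max_eq_left dist_nonneg]
      exact hdist
    have h1 : |w t x - w t₀ x| < ε' := by
      have := hδ (t, x) htK (t₀, x) ht₀K hdd
      rwa [Real.dist_eq] at this
    have h2 : |w t x| ≤ B := hBw (t, x) htK
    have h3 : |w t₀ x| ≤ B := hBw (t₀, x) ht₀K
    have : (w t x)^2 - (w t₀ x)^2 = (w t x - w t₀ x) * (w t x + w t₀ x) := by ring
    rw [this, abs_mul]
    have h4 : |w t x + w t₀ x| ≤ 2*B := le_trans (abs_add_le _ _) (by linarith)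
    exact mul_le_mul h1.le h4 (abs_nonneg _) hε'pos.le
  have := intervalIntegral.norm_integral_le_of_norm_le_const
    (f := fun x => (w t x)^2 - (w t₀ x)^2) (C := ε' * (2*B)) (a := 0) (b := 2*π)
    (by intro x hx; rw [Real.norm_eq_abs]; exact key x hx)
  rw [Real.norm_eq_abs] at this
  refine lt_of_le_of_lt this ?_
  have hπ := Real.pi_pos
  have habs : |2*π - 0| = 2*π := by rw [sub_zero, abs_of_pos (by positivity)]
  rw [habs]
  have hε'eq : ε' * (2*π*(2*B+1) + 1) = ε := by rw [hε']; field_simp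
  nlinarith [hε'pos, hB0]
/-- Backward uniqueness for the semilinear parabolic equation `u_t = u_xx + f(t,u,u_x)`
on the circle `S¹ = ℝ/2πℤ`: two classical solutions on `[0,T]` that agree at time `T`
agree on all of `[0,T]`.  This underlies the injectivity of the time-`T` Poincaré map. -/
theorem backward_uniqueness_semilinear
    (f : ℝ → ℝ → ℝ → ℝ)
    (hf : ContDiff ℝ 2 fun p : ℝ × ℝ × ℝ => f p.1 p.2.1 p.2.2)
    (T : ℝ) (hT : 0 < T)
    (u₁ u₂ u₁t u₂t u₁x u₂x u₁xx u₂xx : ℝ → ℝ → ℝ)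
    -- `u₁`, `u₂` are `2π`-periodic in `x`
    (hu₁P : ∀ t x : ℝ, t ∈ Set.Icc 0 T → u₁ t (x + 2 * π) = u₁ t x)
    (hu₂P : ∀ t x : ℝ, t ∈ Set.Icc 0 T → u₂ t (x + 2 * π) = u₂ t x)
    -- `uᵢ` and `∂ₓ uᵢ` are continuous on `[0,T] × ℝ`
    (hu₁C : ContinuousOn (fun p : ℝ × ℝ => u₁ p.1 p.2) (Set.Icc 0 T ×ˢ Set.univ))
    (hu₂C : ContinuousOn (fun p : ℝ × ℝ => u₂ p.1 p.2) (Set.Icc 0 T ×ˢ Set.univ))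
    (hu₁xC : ContinuousOn (fun p : ℝ × ℝ => u₁x p.1 p.2) (Set.Icc 0 T ×ˢ Set.univ))
    (hu₂xC : ContinuousOn (fun p : ℝ × ℝ => u₂x p.1 p.2) (Set.Icc 0 T ×ˢ Set.univ))
    -- the spatial derivatives exist on `[0,T] × ℝ`
    (hu₁x : ∀ t x : ℝ, t ∈ Set.Icc 0 T → HasDerivAt (fun y => u₁ t y) (u₁x t x) x)
    (hu₂x : ∀ t x : ℝ, t ∈ Set.Icc 0 T → HasDerivAt (fun y => u₂ t y) (u₂x t x) x)
    -- the derivatives `∂ₜ uᵢ`, `∂ₓₓ uᵢ` exist on `(0,T] × ℝ`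
    (hu₁t : ∀ t x : ℝ, t ∈ Set.Ioc 0 T →
      HasDerivWithinAt (fun s => u₁ s x) (u₁t t x) (Set.Icc 0 T) t)
    (hu₂t : ∀ t x : ℝ, t ∈ Set.Ioc 0 T →
      HasDerivWithinAt (fun s => u₂ s x) (u₂t t x) (Set.Icc 0 T) t)
    (hu₁xx : ∀ t x : ℝ, t ∈ Set.Ioc 0 T → HasDerivAt (fun y => u₁x t y) (u₁xx t x) x)
    (hu₂xx : ∀ t x : ℝ, t ∈ Set.Ioc 0 T → HasDerivAt (fun y => u₂x t y) (u₂xx t x) x)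
    -- and are continuous on `(0,T] × ℝ`
    (hu₁tC : ContinuousOn (fun p : ℝ × ℝ => u₁t p.1 p.2) (Set.Ioc 0 T ×ˢ Set.univ))
    (hu₂tC : ContinuousOn (fun p : ℝ × ℝ => u₂t p.1 p.2) (Set.Ioc 0 T ×ˢ Set.univ))
    (hu₁xxC : ContinuousOn (fun p : ℝ × ℝ => u₁xx p.1 p.2) (Set.Ioc 0 T ×ˢ Set.univ))
    (hu₂xxC : ContinuousOn (fun p : ℝ × ℝ => u₂xx p.1 p.2) (Set.Ioc 0 T ×ˢ Set.univ))
    -- the equation holds on `(0,T] × ℝ`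
    (heq₁ : ∀ t x : ℝ, t ∈ Set.Ioc 0 T → u₁t t x = u₁xx t x + f t (u₁ t x) (u₁x t x))
    (heq₂ : ∀ t x : ℝ, t ∈ Set.Ioc 0 T → u₂t t x = u₂xx t x + f t (u₂ t x) (u₂x t x))
    -- the solutions coincide at time `T`
    (hend : ∀ x : ℝ, u₁ T x = u₂ T x) :
    ∀ t x : ℝ, t ∈ Set.Icc 0 T → u₁ t x = u₂ t x := by
  have hπ := Real.pi_pos
  set w : ℝ → ℝ → ℝ := fun t x => u₁ t x - u₂ t x with hwdef
  set wx : ℝ → ℝ → ℝ := fun t x => u₁x t x - u₂x t x with hwxdef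
  set wxx : ℝ → ℝ → ℝ := fun t x => u₁xx t x - u₂xx t x with hwxxdef
  set wt : ℝ → ℝ → ℝ := fun t x => u₁t t x - u₂t t x with hwtdef
  -- continuity of the difference functions on product sets
  have hwC : ContinuousOn (fun p : ℝ × ℝ => w p.1 p.2) (Icc 0 T ×ˢ univ) := hu₁C.sub hu₂C
  have hwxC : ContinuousOn (fun p : ℝ × ℝ => wx p.1 p.2) (Icc 0 T ×ˢ univ) := hu₁xC.sub hu₂xC
  have hwtC : ContinuousOn (fun p : ℝ × ℝ => wt p.1 p.2) (Ioc 0 T ×ˢ univ) := hu₁tC.sub hu₂tC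
  have hwxxC : ContinuousOn (fun p : ℝ × ℝ => wxx p.1 p.2) (Ioc 0 T ×ˢ univ) :=
    hu₁xxC.sub hu₂xxC
  -- periodicity
  have hu₁xP : ∀ t ∈ Icc (0:ℝ) T, ∀ x : ℝ, u₁x t (x + 2*π) = u₁x t x := by
    intro t ht x
    have h1 : HasDerivAt (fun y => u₁ t (y + 2*π)) (u₁x t (x + 2*π)) x := by
      have := (hu₁x t (x + 2*π) ht).comp x ((hasDerivAt_id x).add_const (2*π))
      exact this.congr_deriv (mul_one _)
    have h2 : (fun y => u₁ t (y + 2*π)) = fun y => u₁ t y := by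
      funext y
      have := hu₁P t y ht
      simpa [mul_comm] using this
    rw [h2] at h1
    exact h1.unique (hu₁x t x ht)
  have hu₂xP : ∀ t ∈ Icc (0:ℝ) T, ∀ x : ℝ, u₂x t (x + 2*π) = u₂x t x := by
    intro t ht x
    have h1 : HasDerivAt (fun y => u₂ t (y + 2*π)) (u₂x t (x + 2*π)) x := by
      have := (hu₂x t (x + 2*π) ht).comp x ((hasDerivAt_id x).add_const (2*π))
      exact this.congr_deriv (mul_one _)
    have h2 : (fun y => u₂ t (y + 2*π)) = fun y => u₂ t y := by
      funext y
      have := hu₂P t y ht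
      simpa [mul_comm] using this
    rw [h2] at h1
    exact h1.unique (hu₂x t x ht)
  have hwP : ∀ t ∈ Icc (0:ℝ) T, ∀ x : ℝ, w t (x + 2*π) = w t x := by
    intro t ht x
    simp only [hwdef]
    rw [show x + 2*π = x + 2 * π from rfl, hu₁P t x ht, hu₂P t x ht]
  have hwxP : ∀ t ∈ Icc (0:ℝ) T, ∀ x : ℝ, wx t (x + 2*π) = wx t x := by
    intro t ht x
    simp only [hwxdef]
    rw [hu₁xP t ht x, hu₂xP t ht x]
  -- spatial derivatives
  have hwd : ∀ t ∈ Icc (0:ℝ) T, ∀ x : ℝ, HasDerivAt (w t) (wx t x) x := by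
    intro t ht x
    exact (hu₁x t x ht).sub (hu₂x t x ht)
  have hwxd : ∀ t ∈ Ioc (0:ℝ) T, ∀ x : ℝ, HasDerivAt (wx t) (wxx t x) x := by
    intro t ht x
    exact (hu₁xx t x ht).sub (hu₂xx t x ht)
  -- time derivatives at interior times
  have hwtd : ∀ t ∈ Ioo (0:ℝ) T, ∀ x : ℝ, HasDerivAt (fun s => w s x) (wt t x) t := by
    intro t ht x
    have hmem : Icc (0:ℝ) T ∈ nhds t := Icc_mem_nhds ht.1 ht.2
    exact ((hu₁t t x ⟨ht.1, ht.2.le⟩).hasDerivAt hmem).sub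
      ((hu₂t t x ⟨ht.1, ht.2.le⟩).hasDerivAt hmem)
  -- continuity in x for fixed t
  have cw : ∀ t ∈ Icc (0:ℝ) T, Continuous (w t) := by
    intro t ht
    exact continuous_iff_continuousAt.2 fun x => (hwd t ht x).continuousAt
  have cwx : ∀ t ∈ Icc (0:ℝ) T, Continuous (wx t) := by
    intro t ht
    exact hwxC.comp_continuous (continuous_const.prodMk continuous_id)
      (fun x => ⟨ht, mem_univ x⟩)
  have cwxx : ∀ t ∈ Ioc (0:ℝ) T, Continuous (wxx t) := by
    intro t ht
    exact hwxxC.comp_continuous (continuous_const.prodMk continuous_id)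
      (fun x => ⟨ht, mem_univ x⟩)
  have cwt : ∀ t ∈ Ioc (0:ℝ) T, Continuous (wt t) := by
    intro t ht
    exact hwtC.comp_continuous (continuous_const.prodMk continuous_id)
      (fun x => ⟨ht, mem_univ x⟩)
  -- global bounds
  obtain ⟨M₁, hM₁0, hM₁⟩ := BU_bound isCompact_Icc u₁ hu₁C (fun t ht x => hu₁P t x ht)
  obtain ⟨M₂, hM₂0, hM₂⟩ := BU_bound isCompact_Icc u₂ hu₂C (fun t ht x => hu₂P t x ht)
  obtain ⟨M₃, hM₃0, hM₃⟩ := BU_bound isCompact_Icc u₁x hu₁xC (fun t ht x => hu₁xP t ht x)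
  obtain ⟨M₄, hM₄0, hM₄⟩ := BU_bound isCompact_Icc u₂x hu₂xC (fun t ht x => hu₂xP t ht x)
  set M : ℝ := max (max M₁ M₂) (max M₃ M₄) with hMdef
  obtain ⟨L, hL0, hL⟩ := BU_lip f hf T M
  -- the pointwise bound on the nonlinearity difference
  have hGb : ∀ t ∈ Ioc (0:ℝ) T, ∀ x : ℝ, |wt t x - wxx t x| ≤ L * (|w t x| + |wx t x|) := by
    intro t ht x
    have htI : t ∈ Icc (0:ℝ) T := ⟨ht.1.le, ht.2⟩
    have he : wt t x - wxx t x = f t (u₁ t x) (u₁x t x) - f t (u₂ t x) (u₂x t x) := by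
      simp only [hwtdef, hwxxdef]
      rw [heq₁ t x ht, heq₂ t x ht]
      ring
    rw [he]
    have b1 : |u₁ t x| ≤ M := le_trans (hM₁ t htI x) (le_trans (le_max_left _ _) (le_max_left _ _))
    have b2 : |u₂ t x| ≤ M := le_trans (hM₂ t htI x) (le_trans (le_max_right _ _) (le_max_left _ _))
    have b3 : |u₁x t x| ≤ M := le_trans (hM₃ t htI x) (le_trans (le_max_left _ _) (le_max_right _ _))
    have b4 : |u₂x t x| ≤ M := le_trans (hM₄ t htI x) (le_trans (le_max_right _ _) (le_max_right _ _))
    exact hL t htI _ _ _ _ b1 b3 b2 b4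
  -- the energies
  set E : ℝ → ℝ := fun t => ∫ x in (0:ℝ)..2*π, (w t x)^2 with hEdef
  set D : ℝ → ℝ := fun t => ∫ x in (0:ℝ)..2*π, (wx t x)^2 with hDdef
  set Ed : ℝ → ℝ := fun t => 2 * ∫ x in (0:ℝ)..2*π, w t x * wt t x with hEddef
  set Dd : ℝ → ℝ := fun t => (-2) * ∫ x in (0:ℝ)..2*π, wt t x * wxx t x with hDddef
  have hE0 : ∀ t, 0 ≤ E t := fun t =>
    intervalIntegral.integral_nonneg (by positivity) (fun x _ => sq_nonneg _)
  have hD0 : ∀ t, 0 ≤ D t := fun t =>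
    intervalIntegral.integral_nonneg (by positivity) (fun x _ => sq_nonneg _)
  -- integration by parts
  have hibpD : ∀ t ∈ Ioc (0:ℝ) T, (∫ x in (0:ℝ)..2*π, w t x * wxx t x) = -(D t) := by
    intro t ht
    have htI : t ∈ Icc (0:ℝ) T := ⟨ht.1.le, ht.2⟩
    exact BU_ibp (w t) (wx t) (wxx t) (hwd t htI) (hwxd t ht) (cwx t htI) (cwxx t ht)
      (by simpa using hwP t htI 0) (by simpa using hwxP t htI 0)
  have hsym : ∀ t ∈ Ioc (0:ℝ) T, ∀ s ∈ Ioc (0:ℝ) T,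
      (∫ x in (0:ℝ)..2*π, wxx t x * w s x) = ∫ x in (0:ℝ)..2*π, w t x * wxx s x := by
    intro t ht s hs
    have htI : t ∈ Icc (0:ℝ) T := ⟨ht.1.le, ht.2⟩
    have hsI : s ∈ Icc (0:ℝ) T := ⟨hs.1.le, hs.2⟩
    exact BU_sym (w s) (wx s) (wxx s) (w t) (wx t) (wxx t)
      (hwd s hsI) (hwd t htI) (hwxd s hs) (hwxd t ht)
      (cwx s hsI) (cwx t htI) (cwxx s hs) (cwxx t ht)
      (by simpa using hwP s hsI 0) (by simpa using hwP t htI 0)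
      (by simpa using hwxP s hsI 0) (by simpa using hwxP t htI 0)
  -- derivative of E
  have hE' : ∀ t₀ ∈ Ioo (0:ℝ) T, HasDerivAt E (Ed t₀) t₀ := by
    intro t₀ ht₀
    have ht₀I : t₀ ∈ Icc (0:ℝ) T := ⟨ht₀.1.le, ht₀.2.le⟩
    rw [hasDerivAt_iff_tendsto_slope]
    have hslope := BU_slope (T := T) w wt (fun t x => w t x + w t₀ x) ht₀
      (fun t ht x => hwtd t ht x)
      (fun t ht => cw t ⟨ht.1.le, ht.2.le⟩)
      (hwtC.mono (prod_mono Ioo_subset_Ioc_self (subset_refl _)))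
      ((hwC.mono (prod_mono Ioo_subset_Icc_self (subset_refl _))).add
        (((cw t₀ ht₀I).comp continuous_snd).continuousOn))
    have hlim : (∫ x in (0:ℝ)..2*π, wt t₀ x * (w t₀ x + w t₀ x)) = Ed t₀ := by
      simp only [hEddef]
      rw [← intervalIntegral.integral_const_mul]
      exact intervalIntegral.integral_congr (fun x _ => by ring)
    rw [hlim] at hslope
    refine Filter.Tendsto.congr' ?_ hslope
    filter_upwards [self_mem_nhdsWithin,
      mem_nhdsWithin_of_mem_nhds (Ioo_mem_nhds ht₀.1 ht₀.2)] with t htne htIoo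
    have htI : t ∈ Icc (0:ℝ) T := ⟨htIoo.1.le, htIoo.2.le⟩
    have i1 : IntervalIntegrable (fun x => (w t x)^2) volume 0 (2*π) :=
      ((cw t htI).pow 2).intervalIntegrable _ _
    have i2 : IntervalIntegrable (fun x => (w t₀ x)^2) volume 0 (2*π) :=
      ((cw t₀ ht₀I).pow 2).intervalIntegrable _ _
    rw [slope_def_field]
    simp only [hEdef]
    rw [← intervalIntegral.integral_sub i1 i2, ← intervalIntegral.integral_div]
    exact intervalIntegral.integral_congr (fun x _ => by ring)
  -- derivative of D
  have hD' : ∀ t₀ ∈ Ioo (0:ℝ) T, HasDerivAt D (Dd t₀) t₀ := by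
    intro t₀ ht₀
    have ht₀I : t₀ ∈ Icc (0:ℝ) T := ⟨ht₀.1.le, ht₀.2.le⟩
    have ht₀Ioc : t₀ ∈ Ioc (0:ℝ) T := ⟨ht₀.1, ht₀.2.le⟩
    rw [hasDerivAt_iff_tendsto_slope]
    have hslope := BU_slope (T := T) w wt (fun t x => -(wxx t x + wxx t₀ x)) ht₀
      (fun t ht x => hwtd t ht x)
      (fun t ht => cw t ⟨ht.1.le, ht.2.le⟩)
      (hwtC.mono (prod_mono Ioo_subset_Ioc_self (subset_refl _)))
      (((hwxxC.mono (prod_mono Ioo_subset_Ioc_self (subset_refl _))).add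
        (((cwxx t₀ ht₀Ioc).comp continuous_snd).continuousOn)).neg)
    have hlim : (∫ x in (0:ℝ)..2*π, wt t₀ x * -(wxx t₀ x + wxx t₀ x)) = Dd t₀ := by
      simp only [hDddef]
      rw [← intervalIntegral.integral_const_mul]
      exact intervalIntegral.integral_congr (fun x _ => by ring)
    rw [hlim] at hslope
    refine Filter.Tendsto.congr' ?_ hslope
    filter_upwards [self_mem_nhdsWithin,
      mem_nhdsWithin_of_mem_nhds (Ioo_mem_nhds ht₀.1 ht₀.2)] with t htne htIoo
    have htI : t ∈ Icc (0:ℝ) T := ⟨htIoo.1.le, htIoo.2.le⟩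
    have htIoc : t ∈ Ioc (0:ℝ) T := ⟨htIoo.1, htIoo.2.le⟩
    have i11 : IntervalIntegrable (fun x => w t x * wxx t x) volume 0 (2*π) :=
      ((cw t htI).mul (cwxx t htIoc)).intervalIntegrable _ _
    have i10 : IntervalIntegrable (fun x => w t x * wxx t₀ x) volume 0 (2*π) :=
      ((cw t htI).mul (cwxx t₀ ht₀Ioc)).intervalIntegrable _ _
    have i01 : IntervalIntegrable (fun x => w t₀ x * wxx t x) volume 0 (2*π) :=
      ((cw t₀ ht₀I).mul (cwxx t htIoc)).intervalIntegrable _ _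
    have i00 : IntervalIntegrable (fun x => w t₀ x * wxx t₀ x) volume 0 (2*π) :=
      ((cw t₀ ht₀I).mul (cwxx t₀ ht₀Ioc)).intervalIntegrable _ _
    have hkey : D t - D t₀ = -∫ x in (0:ℝ)..2*π, (w t x - w t₀ x) * (wxx t x + wxx t₀ x) := by
      have e1 : (∫ x in (0:ℝ)..2*π, (w t x - w t₀ x) * (wxx t x + wxx t₀ x))
          = ((∫ x in (0:ℝ)..2*π, w t x * wxx t x) + ∫ x in (0:ℝ)..2*π, w t x * wxx t₀ x)
            - ((∫ x in (0:ℝ)..2*π, w t₀ x * wxx t x)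
              + ∫ x in (0:ℝ)..2*π, w t₀ x * wxx t₀ x) := by
        rw [← intervalIntegral.integral_add i11 i10, ← intervalIntegral.integral_add i01 i00,
          ← intervalIntegral.integral_sub (i11.add i10) (i01.add i00)]
        exact intervalIntegral.integral_congr (fun x _ => by ring)
      have e2 : (∫ x in (0:ℝ)..2*π, w t x * wxx t₀ x)
          = ∫ x in (0:ℝ)..2*π, w t₀ x * wxx t x := by
        rw [← hsym t htIoc t₀ ht₀Ioc]
        exact intervalIntegral.integral_congr (fun x _ => by ring)
      rw [e1, e2, hibpD t htIoc, hibpD t₀ ht₀Ioc]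
      ring
    rw [slope_def_field, hkey, ← intervalIntegral.integral_neg, ← intervalIntegral.integral_div]
    exact intervalIntegral.integral_congr (fun x _ => by ring)
  -- continuity of E
  have hEcont : ContinuousOn E (Icc 0 T) := BU_Econt hT w hwC
  -- E vanishes at T
  have hET : E T = 0 := by
    have hz : EqOn (fun x => (w T x)^2) (fun _ => (0:ℝ)) (uIcc 0 (2*π)) := by
      intro x _
      simp [hwdef, hend x]
    simp only [hEdef]
    rw [intervalIntegral.integral_congr hz]
    simp
  -- the core differential inequalities
  have hcore : ∀ s ∈ Ioo (0:ℝ) T, 0 < E s →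
      (Dd s * E s - D s * Ed s ≤ L^2 * (E s + D s) * E s ∧
       -(2 + L^2) * (E s + D s) ≤ Ed s) := by
    intro s hs hEs
    have hsI : s ∈ Icc (0:ℝ) T := ⟨hs.1.le, hs.2.le⟩
    have hsIoc : s ∈ Ioc (0:ℝ) T := ⟨hs.1, hs.2.le⟩
    obtain ⟨h1, h2⟩ := BU_core (w s) (wx s) (wxx s) (fun x => wt s x - wxx s x) L (E s) (D s)
      hL0 hEs (hD0 s) (cw s hsI) (cwx s hsI) (cwxx s hsIoc)
      ((cwt s hsIoc).sub (cwxx s hsIoc))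
      rfl rfl (hibpD s hsIoc) (fun x => hGb s hsIoc x)
    have cA : (∫ x in (0:ℝ)..2*π, (wxx s x + (wt s x - wxx s x)) * wxx s x)
        = ∫ x in (0:ℝ)..2*π, wt s x * wxx s x :=
      intervalIntegral.integral_congr (fun x _ => by ring)
    have cB : (∫ x in (0:ℝ)..2*π, w s x * (wxx s x + (wt s x - wxx s x)))
        = ∫ x in (0:ℝ)..2*π, w s x * wt s x :=
      intervalIntegral.integral_congr (fun x _ => by ring)
    rw [cA] at h1
    rw [cB] at h1 h2
    exact ⟨h1, h2⟩
  -- E vanishes identically on (0, T)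
  have hEzero : ∀ t ∈ Ioo (0:ℝ) T, E t = 0 := by
    by_contra hc
    push_neg at hc
    obtain ⟨t₀, ht₀, hne⟩ := hc
    have hEt₀ : 0 < E t₀ := lt_of_le_of_ne (hE0 t₀) (Ne.symm hne)
    set S : Set ℝ := {s | s ∈ Icc t₀ T ∧ E s = 0} with hS
    have hTS : T ∈ S := ⟨⟨ht₀.2.le, le_refl T⟩, hET⟩
    have hSc : IsClosed S := by
      have hSeq : S = Icc t₀ T ∩ E ⁻¹' {0} := by
        ext s
        simp [hS]
      rw [hSeq]
      exact (hEcont.mono (Icc_subset_Icc ht₀.1.le (le_refl T))).preimage_isClosed_of_isClosed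
        isClosed_Icc isClosed_singleton
    have hSne : S.Nonempty := ⟨T, hTS⟩
    have hSbdd : BddBelow S := ⟨t₀, fun s hs => hs.1.1⟩
    set b : ℝ := sInf S with hb
    have hbS : b ∈ S := hSc.csInf_mem hSne hSbdd
    have hbI : b ∈ Icc t₀ T := hbS.1
    have hEb : E b = 0 := hbS.2
    have hbne : t₀ ≠ b := by
      intro h
      rw [← h] at hEb
      linarith
    have hab : t₀ < b := lt_of_le_of_ne hbI.1 hbne
    have hEpos' : ∀ s ∈ Ico t₀ b, 0 < E s := by
      intro s hsI
      rcases lt_or_ge 0 (E s) with h | h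
      · exact h
      · exfalso
        have hEs0 : E s = 0 := le_antisymm h (hE0 s)
        have hmem : s ∈ S := ⟨⟨hsI.1, le_trans hsI.2.le hbI.2⟩, hEs0⟩
        have := csInf_le hSbdd hmem
        rw [← hb] at this
        linarith [hsI.2]
    have hIcosub : Ico t₀ b ⊆ Ioo (0:ℝ) T := fun s hsI =>
      ⟨lt_of_lt_of_le ht₀.1 hsI.1, lt_of_lt_of_le hsI.2 hbI.2⟩
    have hfinal := BU_endgame (E := E) (D := D) (E' := Ed) (D' := Dd)
      (a := t₀) (b := b) (C₁ := L^2) (C₂ := 2 + L^2) hab (sq_nonneg L) (by positivity)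
      (hEcont.mono (Icc_subset_Icc ht₀.1.le hbI.2))
      hEpos' (fun s _ => hD0 s)
      (fun s hsI => hE' s (hIcosub hsI)) (fun s hsI => hD' s (hIcosub hsI))
      (fun s hsI => (hcore s (hIcosub hsI) (hEpos' s hsI)).1)
      (fun s hsI => (hcore s (hIcosub hsI) (hEpos' s hsI)).2)
    linarith
  -- w vanishes identically
  have hw0 : ∀ t ∈ Icc (0:ℝ) T, ∀ x : ℝ, w t x = 0 := by
    have hIoc : ∀ t ∈ Ioc (0:ℝ) T, ∀ x : ℝ, w t x = 0 := by
      intro t ht x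
      rcases eq_or_lt_of_le ht.2 with hTeq | hlt
      · rw [hTeq]
        simp [hwdef, hend x]
      · have htIoo : t ∈ Ioo (0:ℝ) T := ⟨ht.1, hlt⟩
        have hEt : E t = 0 := hEzero t htIoo
        simp only [hEdef] at hEt
        have hz := BU_zero (fun y => (w t y)^2) ((cw t ⟨ht.1.le, ht.2⟩).pow 2)
          (fun y => sq_nonneg _)
          (fun y => by
            show (w t (y + 2*π))^2 = (w t y)^2
            rw [hwP t ⟨ht.1.le, ht.2⟩ y]) hEt x
        exact pow_eq_zero_iff (two_ne_zero) |>.1 hz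
    intro t ht x
    rcases eq_or_lt_of_le ht.1 with h0 | h0
    · subst h0
      have hne : (nhdsWithin (0:ℝ) (Ioc 0 T)).NeBot := by
        rw [← mem_closure_iff_nhdsWithin_neBot, closure_Ioc hT.ne]
        exact ⟨le_refl 0, hT.le⟩
      have h1 : Tendsto (fun s => w s x) (nhdsWithin 0 (Ioc 0 T)) (nhds (w 0 x)) := by
        have hcw : ContinuousWithinAt (fun p : ℝ × ℝ => w p.1 p.2) (Icc 0 T ×ˢ univ) (0, x) :=
          hwC (0, x) ⟨⟨le_refl 0, hT.le⟩, mem_univ x⟩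
        have hmap : Tendsto (fun s => ((s, x) : ℝ × ℝ)) (nhdsWithin 0 (Ioc 0 T))
            (nhdsWithin (0, x) (Icc 0 T ×ˢ univ)) := by
          rw [tendsto_nhdsWithin_iff]
          constructor
          · exact ((continuous_id.prodMk continuous_const).tendsto 0).mono_left
              nhdsWithin_le_nhds
          · filter_upwards [self_mem_nhdsWithin] with s hs
            exact ⟨⟨hs.1.le, hs.2⟩, mem_univ x⟩
        exact hcw.tendsto.comp hmap
      have h2 : Tendsto (fun s => w s x) (nhdsWithin 0 (Ioc 0 T)) (nhds 0) := by
        refine Filter.Tendsto.congr' ?_ tendsto_const_nhds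
        filter_upwards [self_mem_nhdsWithin] with s hs
        exact (hIoc s hs x).symm
      exact tendsto_nhds_unique h1 h2
    · exact hIoc t ⟨h0, ht.2⟩ x
  intro t x ht
  have := hw0 t ht x
  simp only [hwdef] at this
  linarith
end

section
/- Let T > 0 and let c, d : [0,T] × ℝ → ℝ be bounded continuous functions that are 2π-periodic in their second argument. Let w : [0,T] × ℝ → ℝ be 2π-periodic in x, with w and ∂_x w continuous on [0,T] × ℝ and ∂_t w, ∂_xx w continuous on (0,T] × ℝ, and suppose w satisfies the linear parabolic equation w_t = w_xx + c(t,x)·w_x + d(t,x)·w on (0,T] × ℝ. If w(T,·) is identically zero, then w is identically zero on [0,T] × ℝ. (This is the backward uniqueness underlying the injectivity of the derivative of the Poincaré map.) -/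
open Real Set

open MeasureTheory Filter Topology intervalIntegral

set_option maxHeartbeats 1000000

private lemma aux_sec_cont {F : ℝ → ℝ → ℝ} {s : Set ℝ}
    (h : ContinuousOn (fun p : ℝ × ℝ => F p.1 p.2) (s ×ˢ (Set.univ : Set ℝ)))
    {t : ℝ} (ht : t ∈ s) : Continuous fun x => F t x := by
  have hc : Continuous fun x : ℝ => ((t, x) : ℝ × ℝ) := continuous_const.prodMk continuous_id
  rw [← continuousOn_univ]
  exact h.comp hc.continuousOn fun x _ => ⟨ht, trivial⟩

private lemma aux_integral_zero {f : ℝ → ℝ} (hc : Continuous f) (hnn : ∀ x, 0 ≤ f x)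
    (h0 : ∫ x in (0:ℝ)..(2*π), f x = 0) : ∀ x ∈ Icc (0:ℝ) (2*π), f x = 0 := by
  have h2π : (0:ℝ) < 2*π := by positivity
  intro x₀ hx₀
  by_contra hne
  have hpos : 0 < f x₀ := lt_of_le_of_ne (hnn x₀) (Ne.symm hne)
  obtain ⟨δ, hδ, hball⟩ := Metric.continuousAt_iff.mp (hc.continuousAt (x := x₀))
    (f x₀ / 2) (by positivity)
  set a := max 0 (x₀ - δ/2) with ha_def
  set b := min (2*π) (x₀ + δ/2) with hb_def
  have hab : a < b :=
    max_lt (lt_min h2π (by linarith [hx₀.1])) (lt_min (by linarith [hx₀.2]) (by linarith))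
  have hmem : ∀ y ∈ Ioo a b, 0 < f y := by
    intro y hy
    have h1 : dist y x₀ < δ := by
      rw [Real.dist_eq, abs_sub_lt_iff]
      have l1 : x₀ - δ/2 ≤ a := le_max_right _ _
      have l2 : b ≤ x₀ + δ/2 := min_le_right _ _
      constructor <;> linarith [hy.1, hy.2]
    have h2 := hball h1
    rw [Real.dist_eq, abs_sub_lt_iff] at h2
    linarith [h2.1, h2.2]
  have h0a : (0:ℝ) ≤ a := le_max_left _ _
  have hb2π : b ≤ 2*π := min_le_left _ _
  have i1 : IntervalIntegrable f volume 0 a := hc.intervalIntegrable _ _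
  have i2 : IntervalIntegrable f volume a b := hc.intervalIntegrable _ _
  have i3 : IntervalIntegrable f volume b (2*π) := hc.intervalIntegrable _ _
  have e1 := integral_add_adjacent_intervals i1 i2
  have e2 := integral_add_adjacent_intervals (hc.intervalIntegrable 0 b) i3
  have p2 : 0 < ∫ x in a..b, f x := intervalIntegral_pos_of_pos_on i2 hmem hab
  have p1 : 0 ≤ ∫ x in (0:ℝ)..a, f x :=
    intervalIntegral.integral_nonneg h0a fun u _ => hnn u
  have p3 : 0 ≤ ∫ x in b..(2*π), f x :=
    intervalIntegral.integral_nonneg hb2π fun u _ => hnn u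
  linarith [e1, e2, h0]

private lemma aux_expand_add {u v : ℝ → ℝ} (hu : Continuous u) (hv : Continuous v) :
    ∫ x in (0:ℝ)..(2*π), (u x + v x)^2 =
      (∫ x in (0:ℝ)..(2*π), (u x)^2) + 2*(∫ x in (0:ℝ)..(2*π), u x * v x)
        + ∫ x in (0:ℝ)..(2*π), (v x)^2 := by
  have h : ∀ x : ℝ, (u x + v x)^2 = (u x)^2 + 2*(u x * v x) + (v x)^2 := fun x => by ring
  have I1 : IntervalIntegrable (fun x => (u x)^2) volume 0 (2*π) :=
    (by fun_prop : Continuous fun x => (u x)^2).intervalIntegrable _ _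
  have I2 : IntervalIntegrable (fun x => 2*(u x * v x)) volume 0 (2*π) :=
    (by fun_prop : Continuous fun x => 2*(u x * v x)).intervalIntegrable _ _
  have I3 : IntervalIntegrable (fun x => (v x)^2) volume 0 (2*π) :=
    (by fun_prop : Continuous fun x => (v x)^2).intervalIntegrable _ _
  simp_rw [h]
  rw [integral_add (I1.add I2) I3, integral_add I1 I2, intervalIntegral.integral_const_mul]

private lemma aux_expand_sub {u v : ℝ → ℝ} (hu : Continuous u) (hv : Continuous v) :
    ∫ x in (0:ℝ)..(2*π), (u x - v x)^2 =
      (∫ x in (0:ℝ)..(2*π), (u x)^2) - 2*(∫ x in (0:ℝ)..(2*π), u x * v x)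
        + ∫ x in (0:ℝ)..(2*π), (v x)^2 := by
  have h : ∀ x : ℝ, (u x - v x)^2 = (u x)^2 - 2*(u x * v x) + (v x)^2 := fun x => by ring
  have I1 : IntervalIntegrable (fun x => (u x)^2) volume 0 (2*π) :=
    (by fun_prop : Continuous fun x => (u x)^2).intervalIntegrable _ _
  have I2 : IntervalIntegrable (fun x => 2*(u x * v x)) volume 0 (2*π) :=
    (by fun_prop : Continuous fun x => 2*(u x * v x)).intervalIntegrable _ _
  have I3 : IntervalIntegrable (fun x => (v x)^2) volume 0 (2*π) :=
    (by fun_prop : Continuous fun x => (v x)^2).intervalIntegrable _ _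
  simp_rw [h]
  rw [integral_add (I1.sub I2) I3, integral_sub I1 I2, intervalIntegral.integral_const_mul]

private lemma aux_expand3 {u v z : ℝ → ℝ} (hu : Continuous u) (hv : Continuous v)
    (hz : Continuous z) :
    ∫ x in (0:ℝ)..(2*π), (u x + v x + z x)^2 =
      (∫ x in (0:ℝ)..(2*π), (u x)^2) + (∫ x in (0:ℝ)..(2*π), (v x)^2)
      + (∫ x in (0:ℝ)..(2*π), (z x)^2)
      + 2*(∫ x in (0:ℝ)..(2*π), u x * v x) + 2*(∫ x in (0:ℝ)..(2*π), u x * z x)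
      + 2*(∫ x in (0:ℝ)..(2*π), v x * z x) := by
  have h : ∀ x : ℝ, (u x + v x + z x)^2 =
      (u x)^2 + (v x)^2 + (z x)^2 + 2*(u x * v x) + 2*(u x * z x) + 2*(v x * z x) :=
    fun x => by ring
  have I1 : IntervalIntegrable (fun x => (u x)^2) volume 0 (2*π) :=
    (by fun_prop : Continuous fun x => (u x)^2).intervalIntegrable _ _
  have I2 : IntervalIntegrable (fun x => (v x)^2) volume 0 (2*π) :=
    (by fun_prop : Continuous fun x => (v x)^2).intervalIntegrable _ _
  have I3 : IntervalIntegrable (fun x => (z x)^2) volume 0 (2*π) :=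
    (by fun_prop : Continuous fun x => (z x)^2).intervalIntegrable _ _
  have I4 : IntervalIntegrable (fun x => 2*(u x * v x)) volume 0 (2*π) :=
    (by fun_prop : Continuous fun x => 2*(u x * v x)).intervalIntegrable _ _
  have I5 : IntervalIntegrable (fun x => 2*(u x * z x)) volume 0 (2*π) :=
    (by fun_prop : Continuous fun x => 2*(u x * z x)).intervalIntegrable _ _
  have I6 : IntervalIntegrable (fun x => 2*(v x * z x)) volume 0 (2*π) :=
    (by fun_prop : Continuous fun x => 2*(v x * z x)).intervalIntegrable _ _
  simp_rw [h]
  rw [integral_add ((((I1.add I2).add I3).add I4).add I5) I6,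
      integral_add (((I1.add I2).add I3).add I4) I5,
      integral_add ((I1.add I2).add I3) I4,
      integral_add (I1.add I2) I3,
      integral_add I1 I2,
      intervalIntegral.integral_const_mul, intervalIntegral.integral_const_mul, intervalIntegral.integral_const_mul]

/-- Backward uniqueness for a linear parabolic equation `w_t = w_xx + c w_x + d w`
on the circle `S¹ = ℝ/2πℤ`: a classical solution on `[0,T]` vanishing identically at
time `T` vanishes identically on `[0,T]`.  This underlies the injectivity of the
derivative of the Poincaré map. -/
theorem backward_uniqueness_linear
    (T : ℝ) (hT : 0 < T)
    (c d w wt wx wxx : ℝ → ℝ → ℝ)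
    -- `c`, `d` are bounded continuous on `[0,T] × ℝ`, `2π`-periodic in `x`
    (hcC : ContinuousOn (fun p : ℝ × ℝ => c p.1 p.2) (Set.Icc 0 T ×ˢ Set.univ))
    (hdC : ContinuousOn (fun p : ℝ × ℝ => d p.1 p.2) (Set.Icc 0 T ×ˢ Set.univ))
    (hcB : ∃ M : ℝ, ∀ t x : ℝ, t ∈ Set.Icc 0 T → |c t x| ≤ M)
    (hdB : ∃ M : ℝ, ∀ t x : ℝ, t ∈ Set.Icc 0 T → |d t x| ≤ M)
    (hcP : ∀ t x : ℝ, t ∈ Set.Icc 0 T → c t (x + 2 * π) = c t x)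
    (hdP : ∀ t x : ℝ, t ∈ Set.Icc 0 T → d t (x + 2 * π) = d t x)
    -- `w` is `2π`-periodic in `x`
    (hwP : ∀ t x : ℝ, t ∈ Set.Icc 0 T → w t (x + 2 * π) = w t x)
    -- `w` and `∂ₓ w` are continuous on `[0,T] × ℝ`
    (hwC : ContinuousOn (fun p : ℝ × ℝ => w p.1 p.2) (Set.Icc 0 T ×ˢ Set.univ))
    (hwxC : ContinuousOn (fun p : ℝ × ℝ => wx p.1 p.2) (Set.Icc 0 T ×ˢ Set.univ))
    -- the spatial derivative exists on `[0,T] × ℝ`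
    (hwx : ∀ t x : ℝ, t ∈ Set.Icc 0 T → HasDerivAt (fun y => w t y) (wx t x) x)
    -- `∂ₜ w`, `∂ₓₓ w` exist on `(0,T] × ℝ`
    (hwt : ∀ t x : ℝ, t ∈ Set.Ioc 0 T →
      HasDerivWithinAt (fun s => w s x) (wt t x) (Set.Icc 0 T) t)
    (hwxx : ∀ t x : ℝ, t ∈ Set.Ioc 0 T → HasDerivAt (fun y => wx t y) (wxx t x) x)
    -- and are continuous on `(0,T] × ℝ`
    (hwtC : ContinuousOn (fun p : ℝ × ℝ => wt p.1 p.2) (Set.Ioc 0 T ×ˢ Set.univ))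
    (hwxxC : ContinuousOn (fun p : ℝ × ℝ => wxx p.1 p.2) (Set.Ioc 0 T ×ˢ Set.univ))
    -- the equation holds on `(0,T] × ℝ`
    (heq : ∀ t x : ℝ, t ∈ Set.Ioc 0 T →
      wt t x = wxx t x + c t x * wx t x + d t x * w t x)
    -- `w(T,·)` vanishes identically
    (hend : ∀ x : ℝ, w T x = 0) :
    ∀ t x : ℝ, t ∈ Set.Icc 0 T → w t x = 0 := by
  obtain ⟨Mc, hMc⟩ := hcB
  obtain ⟨Md, hMd⟩ := hdB
  have h2π : (0:ℝ) < 2*π := by positivity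
  -- continuity of sections
  have cw : ∀ t ∈ Icc (0:ℝ) T, Continuous fun x => w t x := fun t ht => aux_sec_cont hwC ht
  have cwx : ∀ t ∈ Icc (0:ℝ) T, Continuous fun x => wx t x := fun t ht => aux_sec_cont hwxC ht
  have cwxx : ∀ t ∈ Ioc (0:ℝ) T, Continuous fun x => wxx t x := fun t ht => aux_sec_cont hwxxC ht
  have cwt : ∀ t ∈ Ioc (0:ℝ) T, Continuous fun x => wt t x := fun t ht => aux_sec_cont hwtC ht
  -- periodicity of w and wx
  have perw : ∀ t ∈ Icc (0:ℝ) T, Function.Periodic (w t) (2*π) := fun t ht x => hwP t x ht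
  have perwx : ∀ t ∈ Icc (0:ℝ) T, Function.Periodic (wx t) (2*π) := by
    intro t ht x
    have h1 : HasDerivAt (fun y => w t (y + 2*π)) (wx t (x + 2*π)) x :=
      HasDerivAt.comp_add_const x (2*π) (hwx t (x + 2*π) ht)
    have h2 : (fun y => w t (y + 2*π)) = fun y => w t y := funext fun y => hwP t y ht
    rw [h2] at h1
    exact h1.unique (hwx t x ht)
  -- Green's identity
  have green : ∀ t ∈ Ioc (0:ℝ) T, ∀ s ∈ Icc (0:ℝ) T,
      ∫ x in (0:ℝ)..(2*π), wx t x * wx s x = -∫ x in (0:ℝ)..(2*π), wxx t x * w s x := by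
    intro t ht s hs
    have ht' : t ∈ Icc (0:ℝ) T := ⟨ht.1.le, ht.2⟩
    have hder : ∀ x ∈ uIcc (0:ℝ) (2*π), HasDerivAt (fun y => wx t y * w s y)
        (wxx t x * w s x + wx t x * wx s x) x := fun x _ => (hwxx t x ht).mul (hwx s x hs)
    have i1 : IntervalIntegrable (fun x => wxx t x * w s x) volume 0 (2*π) :=
      ((cwxx t ht).mul (cw s hs)).intervalIntegrable _ _
    have i2 : IntervalIntegrable (fun x => wx t x * wx s x) volume 0 (2*π) :=
      ((cwx t ht').mul (cwx s hs)).intervalIntegrable _ _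
    have heval := integral_eq_sub_of_hasDerivAt hder (i1.add i2)
    have e1 : wx t (2*π) = wx t 0 := by simpa using perwx t ht' 0
    have e2 : w s (2*π) = w s 0 := by simpa using perw s hs 0
    rw [integral_add i1 i2, e1, e2] at heval
    linarith [heval]
  -- mean value theorem bound
  have mvt_bound : ∀ a b : ℝ, 0 < a → b ≤ T → ∀ s ∈ Icc a b, ∀ t₀ ∈ Icc a b, ∀ x : ℝ,
      ∃ ξ ∈ uIcc s t₀, w s x - w t₀ x = wt ξ x * (s - t₀) := by
    intro a b ha hb s hs t₀ ht₀ x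
    have hda : ∀ r, 0 < r → r < T → HasDerivAt (fun p => w p x) (wt r x) r := by
      intro r h1 h2
      exact (hwt r x ⟨h1, h2.le⟩).hasDerivAt (Icc_mem_nhds h1 h2)
    have hcont : ∀ lo hi : ℝ, lo ∈ Icc a b → hi ∈ Icc a b →
        ContinuousOn (fun r => w r x) (Icc lo hi) := by
      intro lo hi hlo hhi r hr
      have hr' : r ∈ Ioc (0:ℝ) T :=
        ⟨lt_of_lt_of_le ha (le_trans hlo.1 hr.1), le_trans (le_trans hr.2 hhi.2) hb⟩
      exact ((hwt r x hr').continuousWithinAt).mono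
        (Icc_subset_Icc (le_trans ha.le hlo.1) (le_trans hhi.2 hb))
    rcases lt_trichotomy s t₀ with hlt | heqq | hgt
    · obtain ⟨ξ, hξ, hval⟩ := exists_hasDerivAt_eq_slope (fun r => w r x) (fun r => wt r x) hlt
        (hcont s t₀ hs ht₀)
        (fun r hr => hda r (lt_of_lt_of_le ha (le_trans hs.1 hr.1.le))
          (lt_of_lt_of_le hr.2 (le_trans ht₀.2 hb)))
      refine ⟨ξ, ?_, ?_⟩
      · rw [Set.mem_uIcc]; exact Or.inl ⟨hξ.1.le, hξ.2.le⟩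
      · have hne : t₀ - s ≠ 0 := by intro hcon; linarith [sub_eq_zero.mp hcon]
        rw [eq_div_iff hne] at hval
        linear_combination hval
    · exact ⟨t₀, by rw [Set.mem_uIcc]; exact Or.inr ⟨le_refl _, heqq.ge⟩, by rw [heqq]; ring⟩
    · obtain ⟨ξ, hξ, hval⟩ := exists_hasDerivAt_eq_slope (fun r => w r x) (fun r => wt r x) hgt
        (hcont t₀ s ht₀ hs)
        (fun r hr => hda r (lt_of_lt_of_le ha (le_trans ht₀.1 hr.1.le))
          (lt_of_lt_of_le hr.2 (le_trans hs.2 hb)))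
      refine ⟨ξ, ?_, ?_⟩
      · rw [Set.mem_uIcc]; exact Or.inr ⟨hξ.1.le, hξ.2.le⟩
      · have hne : s - t₀ ≠ 0 := by intro hcon; linarith [sub_eq_zero.mp hcon]
        rw [eq_div_iff hne] at hval
        linear_combination -hval
  -- differentiation under the integral sign
  have lemA : ∀ φ : ℝ → ℝ, Continuous φ → ∀ t₀, t₀ ∈ Ioo (0:ℝ) T →
      HasDerivAt (fun s => ∫ x in (0:ℝ)..(2*π), φ x * w s x)
        (∫ x in (0:ℝ)..(2*π), φ x * wt t₀ x) t₀ := by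
    intro φ hφ t₀ ht₀
    set a := t₀/2 with ha_def
    set b := (t₀ + T)/2 with hb_def
    have ha0 : 0 < a := half_pos ht₀.1
    have hat : a < t₀ := half_lt_self ht₀.1
    have htb : t₀ < b := by rw [hb_def]; linarith [ht₀.2]
    have hbT : b < T := by rw [hb_def]; linarith [ht₀.2, ht₀.1]
    have hbT' : b ≤ T := hbT.le
    have htab : t₀ ∈ Icc a b := ⟨hat.le, htb.le⟩
    have htmem : t₀ ∈ Icc (0:ℝ) T := ⟨ht₀.1.le, ht₀.2.le⟩
    have hUC : UniformContinuousOn (fun p : ℝ × ℝ => wt p.1 p.2)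
        (Icc a b ×ˢ Icc 0 (2*π)) := by
      apply IsCompact.uniformContinuousOn_of_continuous (isCompact_Icc.prod isCompact_Icc)
      apply hwtC.mono
      rintro ⟨p, q⟩ ⟨hp, hq⟩
      exact ⟨⟨lt_of_lt_of_le ha0 hp.1, le_trans hp.2 hbT'⟩, trivial⟩
    rw [Metric.uniformContinuousOn_iff] at hUC
    set Iφ := ∫ x in (0:ℝ)..(2*π), |φ x| with hIφ_def
    have hIφ0 : 0 ≤ Iφ := intervalIntegral.integral_nonneg h2π.le fun x _ => abs_nonneg _
    rw [hasDerivAt_iff_tendsto_slope, Metric.tendsto_nhdsWithin_nhds]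
    intro ε hε
    have hε' : 0 < ε / (Iφ + 1) := by positivity
    obtain ⟨δ₀, hδ₀, hδ⟩ := hUC _ hε'
    refine ⟨min δ₀ (min (t₀ - a) (b - t₀)),
      lt_min hδ₀ (lt_min (by linarith) (by linarith)), ?_⟩
    intro s hsne hdist
    have hd0 : dist s t₀ < δ₀ := lt_of_lt_of_le hdist (min_le_left _ _)
    have hdab : s ∈ Icc a b := by
      rw [Real.dist_eq] at hdist
      have h1 := lt_of_lt_of_le hdist ((min_le_right _ _).trans (min_le_left _ _))
      have h2 := lt_of_lt_of_le hdist ((min_le_right _ _).trans (min_le_right _ _))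
      rw [abs_sub_lt_iff] at h1
      rw [abs_sub_lt_iff] at h2
      exact ⟨by linarith [h1.2], by linarith [h2.1]⟩
    have hsne' : s ≠ t₀ := hsne
    have hsub0 : s - t₀ ≠ 0 := sub_ne_zero.mpr hsne'
    have hsmem : s ∈ Icc (0:ℝ) T := ⟨(lt_of_lt_of_le ha0 hdab.1).le, le_trans hdab.2 hbT'⟩
    -- pointwise bound via MVT
    have hpt : ∀ x ∈ Icc (0:ℝ) (2*π),
        |(w s x - w t₀ x)/(s - t₀) - wt t₀ x| ≤ ε/(Iφ+1) := by
      intro x hx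
      obtain ⟨ξ, hξ, hval⟩ := mvt_bound a b ha0 hbT' s hdab t₀ htab x
      have hslopeval : (w s x - w t₀ x)/(s - t₀) = wt ξ x := by
        rw [hval]; field_simp
      rw [hslopeval]
      have hξab : ξ ∈ Icc a b := uIcc_subset_Icc hdab htab hξ
      have hξdist : |ξ - t₀| ≤ |s - t₀| := by
        rw [Set.mem_uIcc] at hξ
        rw [abs_le]
        rcases hξ with ⟨l1, l2⟩ | ⟨l1, l2⟩ <;> constructor <;>
          nlinarith [le_abs_self (s - t₀), neg_abs_le (s - t₀)]
      have hpair : dist ((ξ, x) : ℝ × ℝ) ((t₀, x) : ℝ × ℝ) < δ₀ := by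
        rw [Prod.dist_eq]
        simp only [dist_self]
        rw [max_eq_left dist_nonneg, Real.dist_eq]
        rw [Real.dist_eq] at hd0
        exact lt_of_le_of_lt hξdist hd0
      have := hδ (ξ, x) ⟨hξab, hx⟩ (t₀, x) ⟨htab, hx⟩ hpair
      rw [Real.dist_eq] at this
      exact this.le
    -- main estimate
    have Iws : IntervalIntegrable (fun x => φ x * w s x) volume 0 (2*π) :=
      (hφ.mul (cw s hsmem)).intervalIntegrable _ _
    have Iwt0 : IntervalIntegrable (fun x => φ x * w t₀ x) volume 0 (2*π) :=
      (hφ.mul (cw t₀ htmem)).intervalIntegrable _ _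
    have hslope : slope (fun r => ∫ x in (0:ℝ)..(2*π), φ x * w r x) t₀ s
        = ∫ x in (0:ℝ)..(2*π), φ x * ((w s x - w t₀ x)/(s - t₀)) := by
      rw [slope_def_field, ← integral_sub Iws Iwt0, ← intervalIntegral.integral_div]
      congr 1; funext x; ring
    rw [Real.dist_eq, hslope]
    have Iq : IntervalIntegrable (fun x => φ x * ((w s x - w t₀ x)/(s - t₀))) volume 0 (2*π) :=
      (hφ.mul (((cw s hsmem).sub (cw t₀ htmem)).div_const _)).intervalIntegrable _ _
    have Iwt0' : IntervalIntegrable (fun x => φ x * wt t₀ x) volume 0 (2*π) :=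
      (hφ.mul (cwt t₀ ⟨ht₀.1, ht₀.2.le⟩)).intervalIntegrable _ _
    have hdiff : (∫ x in (0:ℝ)..(2*π), φ x * ((w s x - w t₀ x)/(s - t₀)))
        - (∫ x in (0:ℝ)..(2*π), φ x * wt t₀ x)
        = ∫ x in (0:ℝ)..(2*π), φ x * ((w s x - w t₀ x)/(s - t₀) - wt t₀ x) := by
      rw [← integral_sub Iq Iwt0']
      congr 1; funext x; ring
    rw [hdiff]
    have Iq2 : IntervalIntegrable (fun x => φ x * ((w s x - w t₀ x)/(s - t₀) - wt t₀ x))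
        volume 0 (2*π) :=
      (hφ.mul ((((cw s hsmem).sub (cw t₀ htmem)).div_const _).sub
        (cwt t₀ ⟨ht₀.1, ht₀.2.le⟩))).intervalIntegrable _ _
    calc |∫ x in (0:ℝ)..(2*π), φ x * ((w s x - w t₀ x)/(s - t₀) - wt t₀ x)|
        ≤ ∫ x in (0:ℝ)..(2*π), |φ x * ((w s x - w t₀ x)/(s - t₀) - wt t₀ x)| :=
          abs_integral_le_integral_abs h2π.le
      _ ≤ ∫ x in (0:ℝ)..(2*π), |φ x| * (ε/(Iφ+1)) := by
          apply integral_mono_on h2π.le (Iq2.abs) ((hφ.abs.mul continuous_const).intervalIntegrable _ _)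
          intro x hx
          rw [abs_mul]
          exact mul_le_mul_of_nonneg_left (hpt x hx) (abs_nonneg _)
      _ = Iφ * (ε/(Iφ+1)) := by rw [intervalIntegral.integral_mul_const]
      _ < ε := by
          rw [mul_div_assoc']
          rw [div_lt_iff₀ (by linarith : (0:ℝ) < Iφ + 1)]
          nlinarith
  -- energy quantities
  set g : ℝ → ℝ → ℝ := fun t x => c t x * wx t x + d t x * w t x with hg_def
  set H : ℝ → ℝ := fun t => ∫ x in (0:ℝ)..(2*π), (w t x)^2 with hH_def
  set D : ℝ → ℝ := fun t => ∫ x in (0:ℝ)..(2*π), (wx t x)^2 with hD_def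
  set Q : ℝ → ℝ := fun t => ∫ x in (0:ℝ)..(2*π), (wxx t x)^2 with hQ_def
  set E : ℝ → ℝ := fun t => ∫ x in (0:ℝ)..(2*π), (g t x)^2 with hE_def
  set S : ℝ → ℝ := fun t => ∫ x in (0:ℝ)..(2*π), w t x * g t x with hS_def
  set P : ℝ → ℝ := fun t => ∫ x in (0:ℝ)..(2*π), wxx t x * g t x with hP_def
  have cg : ∀ t ∈ Icc (0:ℝ) T, Continuous fun x => g t x := fun t ht =>
    ((aux_sec_cont hcC ht).mul (cwx t ht)).add ((aux_sec_cont hdC ht).mul (cw t ht))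
  have hHnn : ∀ t, 0 ≤ H t := fun t =>
    intervalIntegral.integral_nonneg h2π.le fun x _ => sq_nonneg _
  have hDnn : ∀ t, 0 ≤ D t := fun t =>
    intervalIntegral.integral_nonneg h2π.le fun x _ => sq_nonneg _
  have hHT : H T = 0 := by
    rw [hH_def]
    simp only [hend]
    simp
  -- a Lipschitz-in-time bound for w near an interior time
  have wtbound : ∀ t₀ ∈ Ioo (0:ℝ) T, ∃ a b : ℝ, 0 < a ∧ a < t₀ ∧ t₀ < b ∧ b ≤ T ∧
      ∃ C : ℝ, 0 ≤ C ∧ (∀ s ∈ Icc a b, ∀ x ∈ Icc (0:ℝ) (2*π), |wt s x| ≤ C) ∧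
        ∀ s ∈ Icc a b, ∀ x ∈ Icc (0:ℝ) (2*π), |w s x - w t₀ x| ≤ C * |s - t₀| := by
    intro t₀ ht₀
    have hh1 : t₀ < (t₀ + T)/2 := by linarith [ht₀.2]
    have hh2 : (t₀ + T)/2 ≤ T := by linarith [ht₀.2]
    refine ⟨t₀/2, (t₀ + T)/2, half_pos ht₀.1, half_lt_self ht₀.1, hh1, hh2, ?_⟩
    set a := t₀/2 with ha_def
    set b := (t₀ + T)/2 with hb_def
    have ha0 : 0 < a := half_pos ht₀.1
    have hbT' : b ≤ T := hh2
    have hsub : (Icc a b ×ˢ Icc (0:ℝ) (2*π)) ⊆ Ioc (0:ℝ) T ×ˢ (univ : Set ℝ) := by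
      rintro ⟨p, q⟩ ⟨hp, hq⟩
      exact ⟨⟨lt_of_lt_of_le ha0 hp.1, le_trans hp.2 hbT'⟩, trivial⟩
    obtain ⟨C, hC⟩ := (isCompact_Icc.prod isCompact_Icc).exists_bound_of_continuousOn
      (hwtC.mono hsub)
    refine ⟨max C 0, le_max_right _ _, ?_, ?_⟩
    · intro s hs x hx
      have := hC (s, x) ⟨hs, hx⟩
      rw [Real.norm_eq_abs] at this
      exact this.trans (le_max_left _ _)
    · intro s hs x hx
      have htab : t₀ ∈ Icc a b := ⟨(half_lt_self ht₀.1).le, hh1.le⟩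
      obtain ⟨ξ, hξ, hval⟩ := mvt_bound a b ha0 hbT' s hs t₀ htab x
      have hξab : ξ ∈ Icc a b := uIcc_subset_Icc hs htab hξ
      rw [hval, abs_mul]
      apply mul_le_mul_of_nonneg_right _ (abs_nonneg _)
      have := hC (ξ, x) ⟨hξab, hx⟩
      rw [Real.norm_eq_abs] at this
      exact this.trans (le_max_left _ _)
  -- the quadratic remainders are o(s - t₀)
  have slope0w : ∀ t₀ ∈ Ioo (0:ℝ) T,
      Tendsto (fun s => (∫ x in (0:ℝ)..(2*π), (w s x - w t₀ x)^2) / (s - t₀))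
        (𝓝[≠] t₀) (𝓝 0) := by
    intro t₀ ht₀
    obtain ⟨a, b, ha0, hat, htb, hbT', C, hC0, hCwt, hCw⟩ := wtbound t₀ ht₀
    rw [Metric.tendsto_nhdsWithin_nhds]
    intro ε hε
    refine ⟨min (ε/(2*π*C^2+1)) (min (t₀ - a) (b - t₀)),
      lt_min (by positivity) (lt_min (by linarith) (by linarith)), ?_⟩
    intro s _ hdist
    have hd1 : |s - t₀| < ε/(2*π*C^2+1) := by
      rw [Real.dist_eq] at hdist; exact lt_of_lt_of_le hdist (min_le_left _ _)
    have hdab : s ∈ Icc a b := by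
      rw [Real.dist_eq] at hdist
      have h1 := lt_of_lt_of_le hdist ((min_le_right _ _).trans (min_le_left _ _))
      have h2 := lt_of_lt_of_le hdist ((min_le_right _ _).trans (min_le_right _ _))
      rw [abs_sub_lt_iff] at h1
      rw [abs_sub_lt_iff] at h2
      exact ⟨by linarith [h1.2], by linarith [h2.1]⟩
    have hsmem : s ∈ Icc (0:ℝ) T := ⟨(lt_of_lt_of_le ha0 hdab.1).le, le_trans hdab.2 hbT'⟩
    have htmem : t₀ ∈ Icc (0:ℝ) T := ⟨ht₀.1.le, ht₀.2.le⟩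
    have hint : IntervalIntegrable (fun x => (w s x - w t₀ x)^2) volume 0 (2*π) :=
      ((((cw s hsmem).sub (cw t₀ htmem)).pow 2).intervalIntegrable _ _)
    have hb1 : (∫ x in (0:ℝ)..(2*π), (w s x - w t₀ x)^2)
        ≤ 2*π * (C^2 * (s - t₀)^2) := by
      have := intervalIntegral.integral_mono_on h2π.le hint
        (intervalIntegrable_const) (fun x hx => by
          have h := hCw s hdab x hx
          have : (w s x - w t₀ x)^2 ≤ (C * |s - t₀|)^2 := by
            rw [← sq_abs]
            exact pow_le_pow_left₀ (abs_nonneg _) h 2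
          calc (w s x - w t₀ x)^2 ≤ (C*|s - t₀|)^2 := this
            _ = C^2 * (s - t₀)^2 := by rw [mul_pow, sq_abs])
      rw [intervalIntegral.integral_const] at this
      calc (∫ x in (0:ℝ)..(2*π), (w s x - w t₀ x)^2)
          ≤ (2*π - 0) • (C^2 * (s - t₀)^2) := this
        _ = 2*π * (C^2 * (s - t₀)^2) := by rw [smul_eq_mul]; ring
    have hnn : 0 ≤ ∫ x in (0:ℝ)..(2*π), (w s x - w t₀ x)^2 :=
      intervalIntegral.integral_nonneg h2π.le fun x _ => sq_nonneg _
    rw [Real.dist_eq, sub_zero, abs_div]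
    rcases eq_or_ne (s - t₀) 0 with hz | hz
    · rw [hz]; simpa using hε
    · rw [div_lt_iff₀ (abs_pos.mpr hz)]
      rw [abs_of_nonneg hnn]
      calc (∫ x in (0:ℝ)..(2*π), (w s x - w t₀ x)^2)
          ≤ 2*π * (C^2 * (s - t₀)^2) := hb1
        _ = (2*π*C^2*|s - t₀|) * |s - t₀| := by
            rw [← sq_abs (s - t₀)]; ring
        _ < ε * |s - t₀| := by
            have hc1 : 2*π*C^2*|s - t₀| ≤ 2*π*C^2*(ε/(2*π*C^2+1)) :=
              mul_le_mul_of_nonneg_left hd1.le (by positivity)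
            have hc2 : 2*π*C^2*(ε/(2*π*C^2+1)) < ε := by
              rw [mul_div_assoc', div_lt_iff₀ (by positivity : (0:ℝ) < 2*π*C^2+1)]
              nlinarith [sq_nonneg C, h2π, hε]
            exact mul_lt_mul_of_pos_right (by linarith) (abs_pos.mpr hz)
  have slope0wx : ∀ t₀ ∈ Ioo (0:ℝ) T,
      Tendsto (fun s => (∫ x in (0:ℝ)..(2*π), (wx s x - wx t₀ x)^2) / (s - t₀))
        (𝓝[≠] t₀) (𝓝 0) := by
    intro t₀ ht₀
    obtain ⟨a, b, ha0, hat, htb, hbT', C, hC0, hCwt, hCw⟩ := wtbound t₀ ht₀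
    have hUC : UniformContinuousOn (fun p : ℝ × ℝ => wxx p.1 p.2)
        (Icc a b ×ˢ Icc 0 (2*π)) := by
      apply IsCompact.uniformContinuousOn_of_continuous (isCompact_Icc.prod isCompact_Icc)
      apply hwxxC.mono
      rintro ⟨p, q⟩ ⟨hp, hq⟩
      exact ⟨⟨lt_of_lt_of_le ha0 hp.1, le_trans hp.2 hbT'⟩, trivial⟩
    rw [Metric.uniformContinuousOn_iff] at hUC
    rw [Metric.tendsto_nhdsWithin_nhds]
    intro ε hε
    have hεu : 0 < ε/(2*π*C+1) := by positivity
    obtain ⟨δ₀, hδ₀, hδ⟩ := hUC _ hεu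
    refine ⟨min δ₀ (min (t₀ - a) (b - t₀)),
      lt_min hδ₀ (lt_min (by linarith) (by linarith)), ?_⟩
    intro s _ hdist
    have hd0 : |s - t₀| < δ₀ := by
      rw [Real.dist_eq] at hdist; exact lt_of_lt_of_le hdist (min_le_left _ _)
    have hdab : s ∈ Icc a b := by
      rw [Real.dist_eq] at hdist
      have h1 := lt_of_lt_of_le hdist ((min_le_right _ _).trans (min_le_left _ _))
      have h2 := lt_of_lt_of_le hdist ((min_le_right _ _).trans (min_le_right _ _))
      rw [abs_sub_lt_iff] at h1
      rw [abs_sub_lt_iff] at h2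
      exact ⟨by linarith [h1.2], by linarith [h2.1]⟩
    have hsmem : s ∈ Icc (0:ℝ) T := ⟨(lt_of_lt_of_le ha0 hdab.1).le, le_trans hdab.2 hbT'⟩
    have htmem : t₀ ∈ Icc (0:ℝ) T := ⟨ht₀.1.le, ht₀.2.le⟩
    have hsIoc : s ∈ Ioc (0:ℝ) T := ⟨lt_of_lt_of_le ha0 hdab.1, le_trans hdab.2 hbT'⟩
    have htIoc : t₀ ∈ Ioc (0:ℝ) T := ⟨ht₀.1, ht₀.2.le⟩
    have hwxxpt : ∀ x ∈ Icc (0:ℝ) (2*π), |wxx s x - wxx t₀ x| ≤ ε/(2*π*C+1) := by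
      intro x hx
      have := hδ (s, x) ⟨hdab, hx⟩ (t₀, x) ⟨⟨hat.le, htb.le⟩, hx⟩ (by
        rw [Prod.dist_eq]; simp only [dist_self]
        rw [max_eq_left dist_nonneg, Real.dist_eq]; exact hd0)
      rw [Real.dist_eq] at this; exact this.le
    -- identity via Green's formula
    have iss : IntervalIntegrable (fun x => wxx s x * w s x) volume 0 (2*π) :=
      ((cwxx s hsIoc).mul (cw s hsmem)).intervalIntegrable _ _
    have ist : IntervalIntegrable (fun x => wxx s x * w t₀ x) volume 0 (2*π) :=
      ((cwxx s hsIoc).mul (cw t₀ htmem)).intervalIntegrable _ _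
    have its : IntervalIntegrable (fun x => wxx t₀ x * w s x) volume 0 (2*π) :=
      ((cwxx t₀ htIoc).mul (cw s hsmem)).intervalIntegrable _ _
    have itt : IntervalIntegrable (fun x => wxx t₀ x * w t₀ x) volume 0 (2*π) :=
      ((cwxx t₀ htIoc).mul (cw t₀ htmem)).intervalIntegrable _ _
    have hprod : ∫ x in (0:ℝ)..(2*π), (wxx s x - wxx t₀ x) * (w s x - w t₀ x)
        = (∫ x in (0:ℝ)..(2*π), wxx s x * w s x) - (∫ x in (0:ℝ)..(2*π), wxx s x * w t₀ x)
          - ((∫ x in (0:ℝ)..(2*π), wxx t₀ x * w s x)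
            - (∫ x in (0:ℝ)..(2*π), wxx t₀ x * w t₀ x)) := by
      rw [show (fun x => (wxx s x - wxx t₀ x) * (w s x - w t₀ x))
          = fun x => (wxx s x * w s x - wxx s x * w t₀ x)
            - (wxx t₀ x * w s x - wxx t₀ x * w t₀ x) from funext fun x => by ring]
      rw [integral_sub (iss.sub ist) (its.sub itt), integral_sub iss ist, integral_sub its itt]
    have gss := green s hsIoc s hsmem
    have gst := green s hsIoc t₀ htmem
    have gts := green t₀ htIoc s hsmem
    have gtt := green t₀ htIoc t₀ htmem
    have swap : (∫ x in (0:ℝ)..(2*π), wxx s x * w t₀ x)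
        = ∫ x in (0:ℝ)..(2*π), wxx t₀ x * w s x := by
      have e3 : (∫ x in (0:ℝ)..(2*π), wx s x * wx t₀ x)
          = ∫ x in (0:ℝ)..(2*π), wx t₀ x * wx s x := by
        rw [show (fun x => wx s x * wx t₀ x) = fun x => wx t₀ x * wx s x
          from funext fun x => mul_comm _ _]
      linarith [gst, gts]
    have e1 := aux_expand_sub (cwx s hsmem) (cwx t₀ htmem)
    have sq1 : (∫ x in (0:ℝ)..(2*π), (wx s x)^2)
        = ∫ x in (0:ℝ)..(2*π), wx s x * wx s x := by simp_rw [pow_two]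
    have sq2 : (∫ x in (0:ℝ)..(2*π), (wx t₀ x)^2)
        = ∫ x in (0:ℝ)..(2*π), wx t₀ x * wx t₀ x := by simp_rw [pow_two]
    have hid : (∫ x in (0:ℝ)..(2*π), (wx s x - wx t₀ x)^2)
        = -∫ x in (0:ℝ)..(2*π), (wxx s x - wxx t₀ x) * (w s x - w t₀ x) := by
      rw [hprod]
      linarith [e1, gss, gst, gtt, swap, sq1, sq2]
    -- the bound
    have hnn : 0 ≤ ∫ x in (0:ℝ)..(2*π), (wx s x - wx t₀ x)^2 :=
      intervalIntegral.integral_nonneg h2π.le fun x _ => sq_nonneg _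
    have hptprod : ∀ x ∈ Icc (0:ℝ) (2*π),
        |(wxx s x - wxx t₀ x) * (w s x - w t₀ x)| ≤ (ε/(2*π*C+1)) * (C * |s - t₀|) := by
      intro x hx
      rw [abs_mul]
      exact mul_le_mul (hwxxpt x hx) (hCw s hdab x hx) (abs_nonneg _) hεu.le
    have hbnd : (∫ x in (0:ℝ)..(2*π), (wx s x - wx t₀ x)^2)
        ≤ 2*π * ((ε/(2*π*C+1)) * (C * |s - t₀|)) := by
      rw [hid]
      have iprod : IntervalIntegrable
          (fun x => (wxx s x - wxx t₀ x) * (w s x - w t₀ x)) volume 0 (2*π) :=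
        (((cwxx s hsIoc).sub (cwxx t₀ htIoc)).mul
          ((cw s hsmem).sub (cw t₀ htmem))).intervalIntegrable _ _
      calc -(∫ x in (0:ℝ)..(2*π), (wxx s x - wxx t₀ x) * (w s x - w t₀ x))
          ≤ |∫ x in (0:ℝ)..(2*π), (wxx s x - wxx t₀ x) * (w s x - w t₀ x)| :=
            neg_le_abs _
        _ ≤ ∫ x in (0:ℝ)..(2*π), |(wxx s x - wxx t₀ x) * (w s x - w t₀ x)| :=
            abs_integral_le_integral_abs h2π.le
        _ ≤ ∫ x in (0:ℝ)..(2*π), (ε/(2*π*C+1)) * (C * |s - t₀|) :=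
            intervalIntegral.integral_mono_on h2π.le iprod.abs
              intervalIntegrable_const hptprod
        _ = 2*π * ((ε/(2*π*C+1)) * (C * |s - t₀|)) := by
            rw [intervalIntegral.integral_const, smul_eq_mul]; ring
    rw [Real.dist_eq, sub_zero, abs_div]
    rcases eq_or_ne (s - t₀) 0 with hz | hz
    · rw [hz]; simpa using hε
    · rw [div_lt_iff₀ (abs_pos.mpr hz), abs_of_nonneg hnn]
      have hfin : 2*π * ((ε/(2*π*C+1)) * C) < ε := by
        rw [show 2*π * ((ε/(2*π*C+1)) * C) = (2*π*C) * (ε/(2*π*C+1)) by ring]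
        rw [mul_div_assoc', div_lt_iff₀ (by positivity : (0:ℝ) < 2*π*C+1)]
        nlinarith [hε, hC0, h2π]
      calc (∫ x in (0:ℝ)..(2*π), (wx s x - wx t₀ x)^2)
          ≤ 2*π * ((ε/(2*π*C+1)) * (C * |s - t₀|)) := hbnd
        _ = (2*π * ((ε/(2*π*C+1)) * C)) * |s - t₀| := by ring
        _ < ε * |s - t₀| := mul_lt_mul_of_pos_right hfin (abs_pos.mpr hz)
  -- derivative of H
  have hHd : ∀ t₀ ∈ Ioo (0:ℝ) T, HasDerivAt H (2*(-D t₀ + S t₀)) t₀ := by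
    intro t₀ ht₀
    have htmem : t₀ ∈ Icc (0:ℝ) T := ⟨ht₀.1.le, ht₀.2.le⟩
    have htIoc : t₀ ∈ Ioc (0:ℝ) T := ⟨ht₀.1, ht₀.2.le⟩
    have hφc : Continuous fun x => 2 * w t₀ x := continuous_const.mul (cw t₀ htmem)
    have hAb := lemA (fun x => 2 * w t₀ x) hφc t₀ ht₀
    rw [hasDerivAt_iff_tendsto_slope]
    have hAbslope := hasDerivAt_iff_tendsto_slope.mp hAb
    have h0 := slope0w t₀ ht₀
    have hsum := h0.add hAbslope
    have hcongr : (fun s => (∫ x in (0:ℝ)..(2*π), (w s x - w t₀ x)^2)/(s - t₀)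
        + slope (fun r => ∫ x in (0:ℝ)..(2*π), (2 * w t₀ x) * w r x) t₀ s)
        =ᶠ[𝓝[≠] t₀] slope H t₀ := by
      have hmem : {s : ℝ | s ∈ Ioo (0:ℝ) T} ∈ 𝓝[≠] t₀ :=
        mem_nhdsWithin_of_mem_nhds (isOpen_Ioo.mem_nhds ht₀)
      filter_upwards [hmem] with s hsIoo
      have hs : s ∈ Icc (0:ℝ) T := ⟨hsIoo.1.le, hsIoo.2.le⟩
      rw [slope_def_field, slope_def_field, ← add_div]
      congr 1
      have e1 := aux_expand_sub (cw s hs) (cw t₀ htmem)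
      have c2 : (∫ x in (0:ℝ)..(2*π), (2 * w t₀ x) * w s x)
          = 2 * ∫ x in (0:ℝ)..(2*π), w t₀ x * w s x := by
        rw [show (fun x => (2 * w t₀ x) * w s x) = fun x => 2*(w t₀ x * w s x)
          from funext fun x => by ring, intervalIntegral.integral_const_mul]
      have c3 : (∫ x in (0:ℝ)..(2*π), (2 * w t₀ x) * w t₀ x)
          = 2 * ∫ x in (0:ℝ)..(2*π), (w t₀ x)^2 := by
        rw [show (fun x => (2 * w t₀ x) * w t₀ x) = fun x => 2*((w t₀ x)^2)
          from funext fun x => by ring, intervalIntegral.integral_const_mul]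
      have c4 : (∫ x in (0:ℝ)..(2*π), w s x * w t₀ x)
          = ∫ x in (0:ℝ)..(2*π), w t₀ x * w s x := by
        rw [show (fun x => w s x * w t₀ x) = fun x => w t₀ x * w s x
          from funext fun x => mul_comm _ _]
      have eHs : H s = ∫ x in (0:ℝ)..(2*π), (w s x)^2 := by rw [hH_def]
      have eHt : H t₀ = ∫ x in (0:ℝ)..(2*π), (w t₀ x)^2 := by rw [hH_def]
      linarith [e1, c2, c3, c4, eHs, eHt]
    have hval : (0:ℝ) + (∫ x in (0:ℝ)..(2*π), (2 * w t₀ x) * wt t₀ x)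
        = 2*(-D t₀ + S t₀) := by
      rw [zero_add]
      rw [show (fun x => (2 * w t₀ x) * wt t₀ x)
          = fun x => 2*(w t₀ x * wxx t₀ x + w t₀ x * g t₀ x) from funext fun x => by
        rw [heq t₀ x htIoc]; simp only [hg_def]; ring]
      rw [intervalIntegral.integral_const_mul]
      have iwwxx : IntervalIntegrable (fun x => w t₀ x * wxx t₀ x) volume 0 (2*π) :=
        ((cw t₀ htmem).mul (cwxx t₀ htIoc)).intervalIntegrable _ _
      have iwg : IntervalIntegrable (fun x => w t₀ x * g t₀ x) volume 0 (2*π) :=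
        ((cw t₀ htmem).mul (cg t₀ htmem)).intervalIntegrable _ _
      rw [integral_add iwwxx iwg]
      have h1 : (∫ x in (0:ℝ)..(2*π), w t₀ x * wxx t₀ x) = -D t₀ := by
        have gtt := green t₀ htIoc t₀ htmem
        have comm : (∫ x in (0:ℝ)..(2*π), w t₀ x * wxx t₀ x)
            = ∫ x in (0:ℝ)..(2*π), wxx t₀ x * w t₀ x := by
          rw [show (fun x => w t₀ x * wxx t₀ x) = fun x => wxx t₀ x * w t₀ x
            from funext fun x => mul_comm _ _]
        have sqD : D t₀ = ∫ x in (0:ℝ)..(2*π), wx t₀ x * wx t₀ x := by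
          rw [hD_def]; simp_rw [pow_two]
        linarith [gtt, comm, sqD]
      have h2 : (∫ x in (0:ℝ)..(2*π), w t₀ x * g t₀ x) = S t₀ := by rw [hS_def]
      rw [h1, h2]
    exact hval ▸ (Filter.Tendsto.congr' hcongr hsum)
  -- derivative of D
  have hDd : ∀ t₀ ∈ Ioo (0:ℝ) T, HasDerivAt D (-2*(Q t₀ + P t₀)) t₀ := by
    intro t₀ ht₀
    have htmem : t₀ ∈ Icc (0:ℝ) T := ⟨ht₀.1.le, ht₀.2.le⟩
    have htIoc : t₀ ∈ Ioc (0:ℝ) T := ⟨ht₀.1, ht₀.2.le⟩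
    have hφc : Continuous fun x => -2 * wxx t₀ x := continuous_const.mul (cwxx t₀ htIoc)
    have hAb := lemA (fun x => -2 * wxx t₀ x) hφc t₀ ht₀
    rw [hasDerivAt_iff_tendsto_slope]
    have hAbslope := hasDerivAt_iff_tendsto_slope.mp hAb
    have h0 := slope0wx t₀ ht₀
    have hsum := h0.add hAbslope
    have hcongr : (fun s => (∫ x in (0:ℝ)..(2*π), (wx s x - wx t₀ x)^2)/(s - t₀)
        + slope (fun r => ∫ x in (0:ℝ)..(2*π), (-2 * wxx t₀ x) * w r x) t₀ s)
        =ᶠ[𝓝[≠] t₀] slope D t₀ := by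
      have hmem : {s : ℝ | s ∈ Ioo (0:ℝ) T} ∈ 𝓝[≠] t₀ :=
        mem_nhdsWithin_of_mem_nhds (isOpen_Ioo.mem_nhds ht₀)
      filter_upwards [hmem] with s hsIoo
      have hs : s ∈ Icc (0:ℝ) T := ⟨hsIoo.1.le, hsIoo.2.le⟩
      have hsIoc : s ∈ Ioc (0:ℝ) T := ⟨hsIoo.1, hsIoo.2.le⟩
      rw [slope_def_field, slope_def_field, ← add_div]
      congr 1
      have e1 := aux_expand_sub (cwx s hs) (cwx t₀ htmem)
      have gst := green s hsIoc t₀ htmem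
      have gts := green t₀ htIoc s hs
      have gtt := green t₀ htIoc t₀ htmem
      have commx : (∫ x in (0:ℝ)..(2*π), wx s x * wx t₀ x)
          = ∫ x in (0:ℝ)..(2*π), wx t₀ x * wx s x := by
        rw [show (fun x => wx s x * wx t₀ x) = fun x => wx t₀ x * wx s x
          from funext fun x => mul_comm _ _]
      have cAbs : (∫ x in (0:ℝ)..(2*π), (-2 * wxx t₀ x) * w s x)
          = -2 * ∫ x in (0:ℝ)..(2*π), wxx t₀ x * w s x := by
        rw [show (fun x => (-2 * wxx t₀ x) * w s x) = fun x => -2*(wxx t₀ x * w s x)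
          from funext fun x => by ring, intervalIntegral.integral_const_mul]
      have cAbt : (∫ x in (0:ℝ)..(2*π), (-2 * wxx t₀ x) * w t₀ x)
          = -2 * ∫ x in (0:ℝ)..(2*π), wxx t₀ x * w t₀ x := by
        rw [show (fun x => (-2 * wxx t₀ x) * w t₀ x) = fun x => -2*(wxx t₀ x * w t₀ x)
          from funext fun x => by ring, intervalIntegral.integral_const_mul]
      have eDs : D s = ∫ x in (0:ℝ)..(2*π), (wx s x)^2 := by rw [hD_def]
      have eDt : D t₀ = ∫ x in (0:ℝ)..(2*π), (wx t₀ x)^2 := by rw [hD_def]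
      have sqs : (∫ x in (0:ℝ)..(2*π), (wx s x)^2)
          = ∫ x in (0:ℝ)..(2*π), wx s x * wx s x := by simp_rw [pow_two]
      have sqt : (∫ x in (0:ℝ)..(2*π), (wx t₀ x)^2)
          = ∫ x in (0:ℝ)..(2*π), wx t₀ x * wx t₀ x := by simp_rw [pow_two]
      linarith [e1, gst, gts, gtt, commx, cAbs, cAbt, eDs, eDt, sqs, sqt]
    have hval : (0:ℝ) + (∫ x in (0:ℝ)..(2*π), (-2 * wxx t₀ x) * wt t₀ x)
        = -2*(Q t₀ + P t₀) := by
      rw [zero_add]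
      rw [show (fun x => (-2 * wxx t₀ x) * wt t₀ x)
          = fun x => -2*((wxx t₀ x)^2 + wxx t₀ x * g t₀ x) from funext fun x => by
        rw [heq t₀ x htIoc]; simp only [hg_def]; ring]
      rw [intervalIntegral.integral_const_mul]
      have iq : IntervalIntegrable (fun x => (wxx t₀ x)^2) volume 0 (2*π) :=
        (((cwxx t₀ htIoc)).pow 2).intervalIntegrable _ _
      have ip : IntervalIntegrable (fun x => wxx t₀ x * g t₀ x) volume 0 (2*π) :=
        ((cwxx t₀ htIoc).mul (cg t₀ htmem)).intervalIntegrable _ _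
      rw [integral_add iq ip]
    exact hval ▸ (Filter.Tendsto.congr' hcongr hsum)
  -- continuity of H on [0,T]
  have contH : ContinuousOn H (Icc 0 T) := by
    have hsub : (Icc (0:ℝ) T ×ˢ Icc (0:ℝ) (2*π)) ⊆ Icc 0 T ×ˢ (univ : Set ℝ) := by
      rintro ⟨p, q⟩ ⟨hp, hq⟩; exact ⟨hp, trivial⟩
    obtain ⟨Bw, hBw⟩ := (isCompact_Icc.prod isCompact_Icc).exists_bound_of_continuousOn
      (hwC.mono hsub)
    have hUC : UniformContinuousOn (fun p : ℝ × ℝ => w p.1 p.2)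
        (Icc 0 T ×ˢ Icc 0 (2*π)) :=
      (isCompact_Icc.prod isCompact_Icc).uniformContinuousOn_of_continuous (hwC.mono hsub)
    rw [Metric.uniformContinuousOn_iff] at hUC
    intro t ht
    rw [Metric.continuousWithinAt_iff]
    intro ε hε
    have hε' : 0 < ε / (2*π*(2*|Bw|+1)+1) := by positivity
    obtain ⟨δ₀, hδ₀, hδ⟩ := hUC _ hε'
    refine ⟨δ₀, hδ₀, ?_⟩
    intro s hs hdist
    have hpt : ∀ x ∈ Icc (0:ℝ) (2*π),
        |(w s x)^2 - (w t x)^2| ≤ (ε / (2*π*(2*|Bw|+1)+1)) * (2*|Bw|+1) := by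
      intro x hx
      have h1 : dist ((s, x) : ℝ × ℝ) ((t, x) : ℝ × ℝ) < δ₀ := by
        rw [Prod.dist_eq]; simp only [dist_self]
        rw [max_eq_left dist_nonneg]; exact hdist
      have h2 := hδ (s, x) ⟨hs, hx⟩ (t, x) ⟨ht, hx⟩ h1
      rw [Real.dist_eq] at h2
      have h3 : |w s x| ≤ |Bw| := by
        have := hBw (s, x) ⟨hs, hx⟩
        rw [Real.norm_eq_abs] at this
        exact this.trans (le_abs_self _)
      have h4 : |w t x| ≤ |Bw| := by
        have := hBw (t, x) ⟨ht, hx⟩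
        rw [Real.norm_eq_abs] at this
        exact this.trans (le_abs_self _)
      have h5 : (w s x)^2 - (w t x)^2 = (w s x - w t x)*(w s x + w t x) := by ring
      rw [h5, abs_mul]
      apply mul_le_mul h2.le _ (abs_nonneg _) hε'.le
      calc |w s x + w t x| ≤ |w s x| + |w t x| := abs_add_le _ _
        _ ≤ 2*|Bw|+1 := by linarith
    have isq : IntervalIntegrable (fun x => (w s x)^2) volume 0 (2*π) :=
      ((cw s hs).pow 2).intervalIntegrable _ _
    have itq : IntervalIntegrable (fun x => (w t x)^2) volume 0 (2*π) :=
      ((cw t ht).pow 2).intervalIntegrable _ _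
    have hHst : H s - H t = ∫ x in (0:ℝ)..(2*π), ((w s x)^2 - (w t x)^2) := by
      rw [hH_def]
      exact (integral_sub isq itq).symm
    rw [Real.dist_eq, hHst]
    calc |∫ x in (0:ℝ)..(2*π), ((w s x)^2 - (w t x)^2)|
        ≤ ∫ x in (0:ℝ)..(2*π), |(w s x)^2 - (w t x)^2| :=
          abs_integral_le_integral_abs h2π.le
      _ ≤ ∫ x in (0:ℝ)..(2*π), (ε / (2*π*(2*|Bw|+1)+1)) * (2*|Bw|+1) :=
          intervalIntegral.integral_mono_on h2π.le (isq.sub itq).abs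
            intervalIntegrable_const hpt
      _ = 2*π * ((ε / (2*π*(2*|Bw|+1)+1)) * (2*|Bw|+1)) := by
          rw [intervalIntegral.integral_const, smul_eq_mul]; ring
      _ < ε := by
          rw [show 2*π * ((ε / (2*π*(2*|Bw|+1)+1)) * (2*|Bw|+1))
            = (2*π*(2*|Bw|+1)) * (ε / (2*π*(2*|Bw|+1)+1)) by ring]
          rw [mul_div_assoc', div_lt_iff₀ (by positivity : (0:ℝ) < 2*π*(2*|Bw|+1)+1)]
          nlinarith [hε, abs_nonneg Bw, h2π]
  -- integration by parts at a single time
  have ibp : ∀ t ∈ Ioc (0:ℝ) T, (∫ x in (0:ℝ)..(2*π), wxx t x * w t x) = -D t := by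
    intro t ht
    have gtt := green t ht t ⟨ht.1.le, ht.2⟩
    have sqD : D t = ∫ x in (0:ℝ)..(2*π), wx t x * wx t x := by
      rw [hD_def]; simp_rw [pow_two]
    linarith
  -- scalar inequalities
  have ineq1 : ∀ t ∈ Ioc (0:ℝ) T, 0 < H t → (D t)^2 ≤ Q t * H t := by
    intro t ht hHt
    have htmem : t ∈ Icc (0:ℝ) T := ⟨ht.1.le, ht.2⟩
    have hexp := aux_expand_add (u := fun x => H t * wxx t x) (v := fun x => D t * w t x)
      (continuous_const.mul (cwxx t ht) : Continuous fun x => H t * wxx t x)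
      (continuous_const.mul (cw t htmem) : Continuous fun x => D t * w t x)
    beta_reduce at hexp
    have hnn : 0 ≤ ∫ x in (0:ℝ)..(2*π), (H t * wxx t x + D t * w t x)^2 :=
      intervalIntegral.integral_nonneg h2π.le fun x _ => sq_nonneg _
    have c1 : (∫ x in (0:ℝ)..(2*π), (H t * wxx t x)^2) = (H t)^2 * Q t := by
      rw [show (fun x => (H t * wxx t x)^2) = fun x => (H t)^2 * (wxx t x)^2
        from funext fun x => by ring, intervalIntegral.integral_const_mul]
    have c2 : (∫ x in (0:ℝ)..(2*π), (D t * w t x)^2) = (D t)^2 * H t := by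
      rw [show (fun x => (D t * w t x)^2) = fun x => (D t)^2 * (w t x)^2
        from funext fun x => by ring, intervalIntegral.integral_const_mul]
    have c3 : (∫ x in (0:ℝ)..(2*π), (H t * wxx t x) * (D t * w t x))
        = H t * D t * ∫ x in (0:ℝ)..(2*π), wxx t x * w t x := by
      rw [show (fun x => (H t * wxx t x) * (D t * w t x))
        = fun x => (H t * D t) * (wxx t x * w t x) from funext fun x => by ring,
        intervalIntegral.integral_const_mul]
    rw [hexp, c1, c2, c3, ibp t ht] at hnn
    nlinarith [hnn, hHt]
  have ineq2 : ∀ t ∈ Ioc (0:ℝ) T, 0 < H t →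
      (D t)^2 - H t * Q t - H t * E t ≤ 2*(H t * P t + D t * S t) := by
    intro t ht hHt
    have htmem : t ∈ Icc (0:ℝ) T := ⟨ht.1.le, ht.2⟩
    have hexp := aux_expand3 (u := fun x => H t * wxx t x) (v := fun x => D t * w t x)
      (z := fun x => H t * g t x)
      (continuous_const.mul (cwxx t ht) : Continuous fun x => H t * wxx t x)
      (continuous_const.mul (cw t htmem) : Continuous fun x => D t * w t x)
      (continuous_const.mul (cg t htmem) : Continuous fun x => H t * g t x)
    beta_reduce at hexp
    have hnn : 0 ≤ ∫ x in (0:ℝ)..(2*π), (H t * wxx t x + D t * w t x + H t * g t x)^2 :=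
      intervalIntegral.integral_nonneg h2π.le fun x _ => sq_nonneg _
    have c1 : (∫ x in (0:ℝ)..(2*π), (H t * wxx t x)^2) = (H t)^2 * Q t := by
      rw [show (fun x => (H t * wxx t x)^2) = fun x => (H t)^2 * (wxx t x)^2
        from funext fun x => by ring, intervalIntegral.integral_const_mul]
    have c2 : (∫ x in (0:ℝ)..(2*π), (D t * w t x)^2) = (D t)^2 * H t := by
      rw [show (fun x => (D t * w t x)^2) = fun x => (D t)^2 * (w t x)^2
        from funext fun x => by ring, intervalIntegral.integral_const_mul]
    have c3 : (∫ x in (0:ℝ)..(2*π), (H t * g t x)^2) = (H t)^2 * E t := by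
      rw [show (fun x => (H t * g t x)^2) = fun x => (H t)^2 * (g t x)^2
        from funext fun x => by ring, intervalIntegral.integral_const_mul]
    have c4 : (∫ x in (0:ℝ)..(2*π), (H t * wxx t x) * (D t * w t x))
        = H t * D t * ∫ x in (0:ℝ)..(2*π), wxx t x * w t x := by
      rw [show (fun x => (H t * wxx t x) * (D t * w t x))
        = fun x => (H t * D t) * (wxx t x * w t x) from funext fun x => by ring,
        intervalIntegral.integral_const_mul]
    have c5 : (∫ x in (0:ℝ)..(2*π), (H t * wxx t x) * (H t * g t x))
        = (H t)^2 * P t := by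
      rw [show (fun x => (H t * wxx t x) * (H t * g t x))
        = fun x => (H t)^2 * (wxx t x * g t x) from funext fun x => by ring,
        intervalIntegral.integral_const_mul]
    have c6 : (∫ x in (0:ℝ)..(2*π), (D t * w t x) * (H t * g t x))
        = D t * H t * S t := by
      rw [show (fun x => (D t * w t x) * (H t * g t x))
        = fun x => (D t * H t) * (w t x * g t x) from funext fun x => by ring,
        intervalIntegral.integral_const_mul]
    rw [hexp, c1, c2, c3, c4, c5, c6, ibp t ht] at hnn
    nlinarith [hnn, hHt]
  have ineq3 : ∀ t ∈ Icc (0:ℝ) T, -(H t + E t) ≤ 2 * S t := by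
    intro t htmem
    have hexp := aux_expand_add (cw t htmem) (cg t htmem)
    have hnn : 0 ≤ ∫ x in (0:ℝ)..(2*π), (w t x + g t x)^2 :=
      intervalIntegral.integral_nonneg h2π.le fun x _ => sq_nonneg _
    rw [hexp] at hnn
    have e1 : (∫ x in (0:ℝ)..(2*π), (w t x)^2) = H t := rfl
    have e2 : (∫ x in (0:ℝ)..(2*π), (g t x)^2) = E t := rfl
    have e3 : (∫ x in (0:ℝ)..(2*π), w t x * g t x) = S t := rfl
    rw [e1, e2, e3] at hnn
    linarith
  have ineqE : ∀ t ∈ Icc (0:ℝ) T, E t ≤ 2*Mc^2*D t + 2*Md^2*H t := by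
    intro t htmem
    have hpt : ∀ x ∈ Icc (0:ℝ) (2*π),
        (g t x)^2 ≤ 2*Mc^2*(wx t x)^2 + 2*Md^2*(w t x)^2 := by
      intro x hx
      have hc := hMc t x htmem
      have hd := hMd t x htmem
      have hc2 : (c t x)^2 ≤ Mc^2 := by
        nlinarith [abs_nonneg (c t x), sq_abs (c t x)]
      have hd2 : (d t x)^2 ≤ Md^2 := by
        nlinarith [abs_nonneg (d t x), sq_abs (d t x)]
      have hgval : g t x = c t x * wx t x + d t x * w t x := rfl
      rw [hgval]
      nlinarith [sq_nonneg (c t x * wx t x - d t x * w t x), sq_nonneg (wx t x),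
        sq_nonneg (w t x), hc2, hd2,
        mul_le_mul_of_nonneg_right hc2 (sq_nonneg (wx t x)),
        mul_le_mul_of_nonneg_right hd2 (sq_nonneg (w t x))]
    have iE : IntervalIntegrable (fun x => (g t x)^2) volume 0 (2*π) :=
      ((cg t htmem).pow 2).intervalIntegrable _ _
    have iR : IntervalIntegrable (fun x => 2*Mc^2*(wx t x)^2 + 2*Md^2*(w t x)^2)
        volume 0 (2*π) :=
      ((continuous_const.mul ((cwx t htmem).pow 2)).add
        (continuous_const.mul ((cw t htmem).pow 2))).intervalIntegrable _ _
    have := intervalIntegral.integral_mono_on h2π.le iE iR hpt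
    have hsplit : (∫ x in (0:ℝ)..(2*π), (2*Mc^2*(wx t x)^2 + 2*Md^2*(w t x)^2))
        = 2*Mc^2*D t + 2*Md^2*H t := by
      rw [integral_add (f := fun x => 2*Mc^2*(wx t x)^2) (g := fun x => 2*Md^2*(w t x)^2)
        ((continuous_const.mul ((cwx t htmem).pow 2)).intervalIntegrable _ _)
        ((continuous_const.mul ((cw t htmem).pow 2)).intervalIntegrable _ _),
        intervalIntegral.integral_const_mul, intervalIntegral.integral_const_mul]
    rw [hsplit] at this
    exact this
  -- H vanishes on the open interval
  have hH0 : ∀ t₁ ∈ Ioo (0:ℝ) T, H t₁ = 0 := by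
    intro t₁ ht₁
    by_contra hne
    have hH1 : 0 < H t₁ := lt_of_le_of_ne (hHnn t₁) (Ne.symm hne)
    set K : ℝ := 2*Mc^2 + 2*Md^2 with hK_def
    have hK0 : 0 ≤ K := by positivity
    set Z : Set ℝ := (Icc t₁ T) ∩ H ⁻¹' {0} with hZ_def
    have hZne : Z.Nonempty := ⟨T, ⟨⟨ht₁.2.le, le_refl T⟩, by simpa using hHT⟩⟩
    have hZclosed : IsClosed Z :=
      ContinuousOn.preimage_isClosed_of_isClosed
        (contH.mono (Icc_subset_Icc ht₁.1.le (le_refl T))) isClosed_Icc isClosed_singleton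
    have hZbdd : BddBelow Z := (bddBelow_Icc : BddBelow (Icc t₁ T)).mono inter_subset_left
    set t₂ := sInf Z with ht₂_def
    have ht₂Z : t₂ ∈ Z := hZclosed.csInf_mem hZne hZbdd
    have ht₂Icc : t₂ ∈ Icc t₁ T := ht₂Z.1
    have hHt₂ : H t₂ = 0 := by simpa using ht₂Z.2
    have ht₁₂ : t₁ < t₂ := by
      rcases eq_or_lt_of_le ht₂Icc.1 with heqq | h
      · exact absurd (heqq ▸ hHt₂) hne
      · exact h
    have hposIco : ∀ r ∈ Ico t₁ t₂, 0 < H r := by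
      intro r hr
      rcases lt_or_eq_of_le (hHnn r) with h | h
      · exact h
      · exfalso
        have hrZ : r ∈ Z := ⟨⟨hr.1, hr.2.le.trans ht₂Icc.2⟩, by simp [← h]⟩
        exact absurd (csInf_le hZbdd hrZ) (not_le.mpr hr.2)
    have hIcoIoo : ∀ r ∈ Ico t₁ t₂, r ∈ Ioo (0:ℝ) T := fun r hr =>
      ⟨lt_of_lt_of_le ht₁.1 hr.1, lt_of_lt_of_le hr.2 ht₂Icc.2⟩
    set B : ℝ := (D t₁ / H t₁ + 1) * Real.exp (K*T) with hB_def
    have hL10 : 0 ≤ D t₁ / H t₁ := div_nonneg (hDnn t₁) (hHnn t₁)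
    have hB1 : 0 < D t₁ / H t₁ + 1 := by linarith
    have hB0 : 0 < B := mul_pos hB1 (Real.exp_pos _)
    have hLd : ∀ r ∈ Ico t₁ t₂, HasDerivAt (fun τ => D τ / H τ)
        ((-2*(Q r + P r) * H r - D r * (2*(-D r + S r))) / (H r)^2) r := fun r hr =>
      (hDd r (hIcoIoo r hr)).div (hHd r (hIcoIoo r hr)) (ne_of_gt (hposIco r hr))
    have hLbound : ∀ r ∈ Ico t₁ t₂,
        (-2*(Q r + P r) * H r - D r * (2*(-D r + S r))) / (H r)^2
          ≤ K * (D r/H r + 1) := by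
      intro r hr
      have hIoc : r ∈ Ioc (0:ℝ) T := ⟨(hIcoIoo r hr).1, (hIcoIoo r hr).2.le⟩
      have hHr := hposIco r hr
      have h1 := ineq1 r hIoc hHr
      have h2 := ineq2 r hIoc hHr
      have hE := ineqE r ⟨hIoc.1.le, hIoc.2⟩
      rw [div_le_iff₀ (by positivity : (0:ℝ) < (H r)^2)]
      have hKexp : K * (D r / H r + 1) * (H r)^2 = K*(D r * H r) + K*(H r)^2 := by
        field_simp
      rw [hKexp]
      nlinarith [h1, h2, mul_le_mul_of_nonneg_right hE hHr.le, hDnn r, hHr.le,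
        sq_nonneg Mc, sq_nonneg Md, mul_nonneg (hDnn r) hHr.le, sq_nonneg (H r)]
    have hud : ∀ r ∈ Ico t₁ t₂, HasDerivAt
        (fun τ => (D τ / H τ + 1) * Real.exp (-(K*τ)))
        (((-2*(Q r + P r) * H r - D r * (2*(-D r + S r))) / (H r)^2)
          * Real.exp (-(K*r)) + (D r/H r + 1) * (Real.exp (-(K*r)) * (-K))) r := by
      intro r hr
      have h1 := (hLd r hr).add_const 1
      have hlin : HasDerivAt (fun τ : ℝ => -(K*τ)) (-K) r := by
        simpa [Pi.neg_def] using ((hasDerivAt_id r).const_mul K).neg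
      have hexp : HasDerivAt (fun τ : ℝ => Real.exp (-(K*τ)))
          (Real.exp (-(K*r)) * (-K)) r := hlin.exp
      exact h1.mul hexp
    have hLB : ∀ s ∈ Ico t₁ t₂, D s / H s + 1 ≤ B := by
      intro s hs
      rcases eq_or_lt_of_le hs.1 with heqq | hlt
      · rw [← heqq, hB_def]
        have h1 : 1 ≤ Real.exp (K*T) := Real.one_le_exp (mul_nonneg hK0 hT.le)
        nlinarith [hB1]
      · have hmono : AntitoneOn (fun τ => (D τ / H τ + 1) * Real.exp (-(K*τ)))
            (Icc t₁ s) := by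
          apply antitoneOn_of_deriv_nonpos (convex_Icc _ _)
          · intro r hr
            have hrI : r ∈ Ico t₁ t₂ := ⟨hr.1, lt_of_le_of_lt hr.2 hs.2⟩
            exact (hud r hrI).continuousAt.continuousWithinAt
          · intro r hr
            rw [interior_Icc] at hr
            have hrI : r ∈ Ico t₁ t₂ := ⟨hr.1.le, lt_trans hr.2 hs.2⟩
            exact (hud r hrI).differentiableAt.differentiableWithinAt
          · intro r hr
            rw [interior_Icc] at hr
            have hrI : r ∈ Ico t₁ t₂ := ⟨hr.1.le, lt_trans hr.2 hs.2⟩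
            rw [(hud r hrI).deriv]
            have hb := mul_le_mul_of_nonneg_right (hLbound r hrI)
              (Real.exp_pos (-(K*r))).le
            nlinarith [hb]
        have hus := hmono ⟨le_refl t₁, hlt.le⟩ ⟨hlt.le, le_refl s⟩ hlt.le
        have hsT : s ≤ T := hs.2.le.trans ht₂Icc.2
        calc D s/H s + 1
            = ((D s/H s + 1) * Real.exp (-(K*s))) * Real.exp (K*s) := by
              rw [mul_assoc, ← Real.exp_add]; simp
          _ ≤ ((D t₁/H t₁ + 1) * Real.exp (-(K*t₁))) * Real.exp (K*s) :=
              mul_le_mul_of_nonneg_right hus (Real.exp_pos _).le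
          _ = (D t₁/H t₁ + 1) * Real.exp (K*s - K*t₁) := by
              rw [mul_assoc, ← Real.exp_add,
                show -(K*t₁) + K*s = K*s - K*t₁ by ring]
          _ ≤ (D t₁/H t₁ + 1) * Real.exp (K*T) := by
              apply mul_le_mul_of_nonneg_left _ hB1.le
              apply Real.exp_le_exp.mpr
              nlinarith [mul_le_mul_of_nonneg_left hsT hK0,
                mul_nonneg hK0 ht₁.1.le]
          _ = B := rfl
    set ε₀ : ℝ := Real.exp (Real.log (H t₁) - (K+2)*B*T) with hε₀_def
    have hε₀pos : 0 < ε₀ := Real.exp_pos _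
    have hKB : 0 ≤ (K+2)*B := mul_nonneg (by linarith) hB0.le
    have hlow : ∀ s ∈ Ico t₁ t₂, ε₀ ≤ H s := by
      intro s hs
      rcases eq_or_lt_of_le hs.1 with heqq | hlt
      · rw [← heqq, hε₀_def]
        calc Real.exp (Real.log (H t₁) - (K+2)*B*T)
            ≤ Real.exp (Real.log (H t₁)) := Real.exp_le_exp.mpr
              (by nlinarith [mul_nonneg hKB hT.le])
          _ = H t₁ := Real.exp_log hH1
      · have hvd : ∀ r ∈ Ico t₁ t₂,
            HasDerivAt (fun τ => Real.log (H τ) + ((K+2)*B)*τ)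
              ((2*(-D r + S r)) / H r + (K+2)*B) r := by
          intro r hr
          have h1 := (hHd r (hIcoIoo r hr)).log (ne_of_gt (hposIco r hr))
          have h2 : HasDerivAt (fun τ : ℝ => ((K+2)*B)*τ) ((K+2)*B) r := by
            simpa using (hasDerivAt_id r).const_mul ((K+2)*B)
          exact h1.add h2
        have hvnonneg : ∀ r ∈ Ico t₁ t₂,
            0 ≤ (2*(-D r + S r)) / H r + (K+2)*B := by
          intro r hr
          have hHr := hposIco r hr
          have hIoc : r ∈ Ioc (0:ℝ) T := ⟨(hIcoIoo r hr).1, (hIcoIoo r hr).2.le⟩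
          have h3 := ineq3 r ⟨hIoc.1.le, hIoc.2⟩
          have hE := ineqE r ⟨hIoc.1.le, hIoc.2⟩
          have hLBr := hLB r hr
          have hDH : D r + H r ≤ B * H r := by
            have hmul := mul_le_mul_of_nonneg_right hLBr hHr.le
            rw [add_mul, one_mul, div_mul_cancel₀ _ (ne_of_gt hHr)] at hmul
            linarith
          have hkey : -((K+2)*B) * H r ≤ 2*(-D r + S r) := by
            nlinarith [h3, hE, hDH, hHr.le, hDnn r, hK0, hB0.le,
              mul_le_mul_of_nonneg_left hDH (show (0:ℝ) ≤ K+2 by linarith),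
              sq_nonneg Mc, sq_nonneg Md]
          linarith [(le_div_iff₀ hHr).mpr hkey]
        have hmono : MonotoneOn (fun τ => Real.log (H τ) + ((K+2)*B)*τ)
            (Icc t₁ s) := by
          apply monotoneOn_of_deriv_nonneg (convex_Icc _ _)
          · intro r hr
            have hrI : r ∈ Ico t₁ t₂ := ⟨hr.1, lt_of_le_of_lt hr.2 hs.2⟩
            exact (hvd r hrI).continuousAt.continuousWithinAt
          · intro r hr
            rw [interior_Icc] at hr
            have hrI : r ∈ Ico t₁ t₂ := ⟨hr.1.le, lt_trans hr.2 hs.2⟩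
            exact (hvd r hrI).differentiableAt.differentiableWithinAt
          · intro r hr
            rw [interior_Icc] at hr
            have hrI : r ∈ Ico t₁ t₂ := ⟨hr.1.le, lt_trans hr.2 hs.2⟩
            rw [(hvd r hrI).deriv]
            exact hvnonneg r hrI
        have hms : Real.log (H t₁) + ((K+2)*B)*t₁ ≤ Real.log (H s) + ((K+2)*B)*s :=
          hmono ⟨le_refl t₁, hlt.le⟩ ⟨hlt.le, le_refl s⟩ hlt.le
        have hsT : s ≤ T := hs.2.le.trans ht₂Icc.2
        have hlogHs : Real.log (H t₁) - (K+2)*B*T ≤ Real.log (H s) := by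
          nlinarith [hms, mul_le_mul_of_nonneg_left
            (show s - t₁ ≤ T by nlinarith [ht₁.1.le]) hKB]
        calc ε₀ = Real.exp (Real.log (H t₁) - (K+2)*B*T) := rfl
          _ ≤ Real.exp (Real.log (H s)) := Real.exp_le_exp.mpr hlogHs
          _ = H s := Real.exp_log (hposIco s hs)
    haveI hne2 : (𝓝[Ico t₁ t₂] t₂).NeBot := by
      rw [← mem_closure_iff_nhdsWithin_neBot, closure_Ico (ne_of_lt ht₁₂)]
      exact ⟨ht₁₂.le, le_refl t₂⟩
    have htend : Tendsto H (𝓝[Ico t₁ t₂] t₂) (𝓝 (H t₂)) := by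
      have hcw : ContinuousWithinAt H (Icc 0 T) t₂ :=
        contH t₂ ⟨ht₁.1.le.trans ht₂Icc.1, ht₂Icc.2⟩
      exact hcw.mono_left (nhdsWithin_mono _
        (fun r hr => ⟨ht₁.1.le.trans hr.1, hr.2.le.trans ht₂Icc.2⟩))
    have hge : ε₀ ≤ H t₂ :=
      ge_of_tendsto htend (eventually_mem_nhdsWithin.mono fun r hr => hlow r hr)
    rw [hHt₂] at hge
    linarith
  -- conclusion
  have hzeroIoc : ∀ r ∈ Ioc (0:ℝ) T, ∀ y : ℝ, w r y = 0 := by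
    intro r hr y
    have hHr : H r = 0 := by
      rcases eq_or_lt_of_le hr.2 with heqq | hlt
      · rw [heqq]; exact hHT
      · exact hH0 r ⟨hr.1, hlt⟩
    have hrm : r ∈ Icc (0:ℝ) T := ⟨hr.1.le, hr.2⟩
    have hzero01 : ∀ z ∈ Icc (0:ℝ) (2*π), w r z = 0 := by
      intro z hz
      have h0 : (∫ x in (0:ℝ)..(2*π), (w r x)^2) = 0 := hHr
      have := aux_integral_zero ((cw r hrm).pow 2) (fun x => sq_nonneg _) h0 z hz
      exact sq_eq_zero_iff.mp this
    set n : ℤ := ⌊y / (2*π)⌋ with hn_def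
    have hy1 : 0 ≤ y - n*(2*π) := Int.sub_floor_div_mul_nonneg y h2π
    have hy2 : y - n*(2*π) < 2*π := Int.sub_floor_div_mul_lt y h2π
    have hper : w r (y - n*(2*π) + n*(2*π)) = w r (y - n*(2*π)) :=
      ((perw r hrm).int_mul n) (y - n*(2*π))
    rw [sub_add_cancel] at hper
    rw [hper]
    exact hzero01 _ ⟨hy1, hy2.le⟩
  intro t x ht
  rcases eq_or_lt_of_le ht.1 with heqq | hpos
  · rw [← heqq]
    haveI : (𝓝[Ioo (0:ℝ) T] (0:ℝ)).NeBot := by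
      rw [← mem_closure_iff_nhdsWithin_neBot, closure_Ioo (ne_of_lt hT)]
      exact ⟨le_refl (0:ℝ), hT.le⟩
    have htend : Tendsto (fun s => w s x) (𝓝[Ioo (0:ℝ) T] 0) (𝓝 (w 0 x)) := by
      have hc : ContinuousWithinAt (fun p : ℝ × ℝ => w p.1 p.2)
          (Icc 0 T ×ˢ univ) (0, x) := hwC (0, x) ⟨⟨le_refl (0:ℝ), hT.le⟩, trivial⟩
      have hmap : Tendsto (fun s : ℝ => ((s, x) : ℝ × ℝ)) (𝓝[Ioo (0:ℝ) T] 0)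
          (𝓝[Icc 0 T ×ˢ univ] (0, x)) := by
        rw [tendsto_nhdsWithin_iff]
        constructor
        · exact ((continuous_id.prodMk continuous_const).tendsto 0).mono_left
            nhdsWithin_le_nhds
        · exact eventually_mem_nhdsWithin.mono fun s hs => ⟨⟨hs.1.le, hs.2.le⟩, trivial⟩
      exact hc.tendsto.comp hmap
    have hzero : (fun s => w s x) =ᶠ[𝓝[Ioo (0:ℝ) T] 0] fun _ => 0 :=
      eventually_mem_nhdsWithin.mono fun s hs => hzeroIoc s ⟨hs.1, hs.2.le⟩ x
    exact tendsto_nhds_unique (htend.congr' hzero) tendsto_const_nhds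
  · exact hzeroIoc t ⟨hpos, ht.2⟩ x
end

section
/- Let T > 0 and let f : ℝ × ℝ × ℝ → ℝ be of class C² with f(t+T, y, z) = f(t, y, z) for all (t,y,z), and suppose there exists δ > 0 such that y·f(t, y, 0) < 0 for all t ∈ ℝ and all y with |y| ≥ δ. Then for every R ≥ 0 there exists a constant ζ > 0 (depending only on f, δ and R) with the following property: for every τ ∈ (0,∞] and every classical solution u of u_t = u_xx + f(t, u, u_x) on [0,τ) × ℝ that is 2π-periodic in x (u continuous on [0,τ) × ℝ, with u_t, u_x, u_xx continuous on (0,τ) × ℝ and satisfying the equation there), if sup_x |u(0,x)| ≤ δ + R then sup_x |u(t,x)| ≤ δ + R·e^{−ζt} for all t ∈ [0,τ). -/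
open Real Set ENNReal

open Filter Topology

open Real Set ENNReal Filter Topology

/-- One-sided maximum-principle estimate. -/
lemma onesided_bound (f : ℝ → ℝ → ℝ → ℝ) (δ R m ζ : ℝ)
    (hδ : 0 < δ) (hR : 0 ≤ R) (hm : 0 < m)
    (hfb : ∀ t y : ℝ, δ ≤ y → y ≤ δ + R + 1 → f t y 0 ≤ -m)
    (hζpos : 0 < ζ) (hζR : ζ * R < m)
    (τ : ℝ≥0∞)
    (u ut ux uxx : ℝ → ℝ → ℝ)
    (hper : ∀ t x : ℝ, 0 ≤ t → ENNReal.ofReal t < τ → u t (x + 2 * π) = u t x)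
    (hcont : ContinuousOn (fun p : ℝ × ℝ => u p.1 p.2)
      ({t : ℝ | 0 ≤ t ∧ ENNReal.ofReal t < τ} ×ˢ Set.univ))
    (hderiv : ∀ t x : ℝ, 0 < t → ENNReal.ofReal t < τ →
      HasDerivAt (fun s => u s x) (ut t x) t ∧
      HasDerivAt (fun y => u t y) (ux t x) x ∧
      HasDerivAt (fun y => ux t y) (uxx t x) x)
    (heqn : ∀ t x : ℝ, 0 < t → ENNReal.ofReal t < τ →
      ut t x = uxx t x + f t (u t x) (ux t x))
    (hinit : ∀ x : ℝ, u 0 x ≤ δ + R) :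
    ∀ t x : ℝ, 0 ≤ t → ENNReal.ofReal t < τ → u t x ≤ δ + R * Real.exp (-ζ * t) := by
  intro t₁ x₁ ht₁ hτ₁
  have hdom : ∀ t : ℝ, t ∈ Icc 0 t₁ → 0 ≤ t ∧ ENNReal.ofReal t < τ := by
    intro t ht
    exact ⟨ht.1, lt_of_le_of_lt (ENNReal.ofReal_le_ofReal ht.2) hτ₁⟩
  -- key claim with an ε margin
  have key : ∀ ε : ℝ, 0 < ε → ε ≤ 1 → ∀ t ∈ Icc 0 t₁, ∀ x : ℝ,
      u t x < δ + ε + R * Real.exp (-ζ * t) := by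
    intro ε hε0 hε1
    by_contra hcon
    push_neg at hcon
    obtain ⟨ts, hts, xs, hxs⟩ := hcon
    set w : ℝ → ℝ := fun t => δ + ε + R * Real.exp (-ζ * t) with hw
    -- the "bad" set
    set A : Set ℝ := {t | t ∈ Icc 0 t₁ ∧ ∃ x ∈ Icc 0 (2 * π), w t ≤ u t x} with hA
    have hAsub : A ⊆ Icc 0 t₁ := fun t ht => ht.1
    have hAbdd : BddBelow A := (isCompact_Icc.bddBelow).mono hAsub
    -- A nonempty
    have hAne : A.Nonempty := by
      obtain ⟨x', hx', hxeq⟩ :=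
        (Function.Periodic.exists_mem_Ico₀ (fun x => hper ts x (hdom ts hts).1 (hdom ts hts).2)
          Real.two_pi_pos xs)
      exact ⟨ts, hts, x', ⟨hx'.1, hx'.2.le⟩, hxeq ▸ hxs⟩
    -- A compact
    have hucontD : ContinuousOn (fun p : ℝ × ℝ => u p.1 p.2 - w p.1)
        ((Icc 0 t₁) ×ˢ (Icc 0 (2 * π))) := by
      apply ContinuousOn.sub
      · exact hcont.mono (fun p hp => ⟨hdom p.1 hp.1, trivial⟩)
      · have hwcont : Continuous w := by
          simp only [hw]; fun_prop
        exact (hwcont.comp continuous_fst).continuousOn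
    have hScpt : IsCompact (((Icc 0 t₁) ×ˢ (Icc 0 (2 * π))) ∩
        ((fun p : ℝ × ℝ => u p.1 p.2 - w p.1) ⁻¹' (Ici 0))) := by
      have hclosed : IsClosed (((Icc 0 t₁) ×ˢ (Icc 0 (2 * π))) ∩
          ((fun p : ℝ × ℝ => u p.1 p.2 - w p.1) ⁻¹' (Ici (0 : ℝ)))) :=
        hucontD.preimage_isClosed_of_isClosed
          (isClosed_Icc.prod isClosed_Icc) isClosed_Ici
      exact (isCompact_Icc.prod isCompact_Icc).of_isClosed_subset hclosed inter_subset_left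
    have hAeq : A = Prod.fst '' (((Icc 0 t₁) ×ˢ (Icc 0 (2 * π))) ∩
        ((fun p : ℝ × ℝ => u p.1 p.2 - w p.1) ⁻¹' (Ici 0))) := by
      ext t
      constructor
      · rintro ⟨ht, x, hx, hle⟩
        exact ⟨(t, x), ⟨⟨ht, hx⟩, by simpa using hle⟩, rfl⟩
      · rintro ⟨⟨t', x⟩, ⟨⟨ht, hx⟩, hge⟩, rfl⟩
        exact ⟨ht, x, hx, by simpa using hge⟩
    have hAcpt : IsCompact A := hAeq ▸ hScpt.image continuous_fst
    -- the first bad time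
    set t0 := sInf A with ht0def
    have ht0A : t0 ∈ A := hAcpt.sInf_mem hAne
    obtain ⟨ht0mem, x', hx'mem, hx'ge⟩ := ht0A
    have ht0pos : 0 < t0 := by
      rcases ht0mem.1.eq_or_lt with h | h
      · exfalso
        have h2 : δ + ε + R * Real.exp (-ζ * t0) ≤ u t0 x' := hx'ge
        rw [← h] at h2
        simp only [mul_zero, Real.exp_zero, mul_one] at h2
        linarith [hinit x']
      · exact h
    have hτ0 : ENNReal.ofReal t0 < τ := (hdom t0 ht0mem).2
    -- maximizer in space at time t0
    have hucont0 : ContinuousOn (u t0) (Icc 0 (2 * π)) := by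
      intro x _
      exact ((hderiv t0 x ht0pos hτ0).2.1.continuousAt).continuousWithinAt
    obtain ⟨x0, hx0mem, hx0max⟩ := isCompact_Icc.exists_isMaxOn
      (nonempty_Icc.2 (by positivity)) hucont0
    have hglobal : ∀ x : ℝ, u t0 x ≤ u t0 x0 := by
      intro x
      obtain ⟨y, hy, hyeq⟩ :=
        (Function.Periodic.exists_mem_Ico₀ (fun z => hper t0 z ht0pos.le hτ0)
          Real.two_pi_pos x)
      rw [hyeq]
      exact hx0max ⟨hy.1, hy.2.le⟩
    have hx0ge : w t0 ≤ u t0 x0 := le_trans hx'ge (hx0max hx'mem)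
    -- spatial derivative vanishes
    have hlocmax : IsLocalMax (u t0) x0 := Filter.Eventually.of_forall hglobal
    have hux0 : ux t0 x0 = 0 :=
      hlocmax.hasDerivAt_eq_zero (hderiv t0 x0 ht0pos hτ0).2.1
    -- second spatial derivative nonpositive
    have huxx0 : uxx t0 x0 ≤ 0 := by
      by_contra hpos
      push_neg at hpos
      have hslope := hasDerivAt_iff_tendsto_slope.mp (hderiv t0 x0 ht0pos hτ0).2.2
      have hev : ∀ᶠ x in 𝓝[>] x0, 0 < slope (ux t0) x0 x := by
        have := hslope.eventually (eventually_gt_nhds hpos)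
        exact this.filter_mono (nhdsWithin_mono x0 (fun x hx => hx.ne'))
      obtain ⟨b, hb, hIoo⟩ := mem_nhdsGT_iff_exists_Ioo_subset.mp hev
      have hbx0 : x0 < b := hb
      have huxpos : ∀ x ∈ Ioo x0 b, 0 < ux t0 x := by
        intro x hx
        have h1 : 0 < x - x0 := sub_pos.2 hx.1
        have h2 : 0 < slope (ux t0) x0 x := hIoo hx
        rw [slope_def_field, hux0] at h2
        have := (lt_div_iff₀ h1).mp (by simpa using h2)
        linarith
      set c := (x0 + b) / 2 with hc
      have hx0c : x0 < c := by simp [hc]; linarith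
      have hsm : StrictMonoOn (u t0) (Icc x0 c) := by
        apply strictMonoOn_of_deriv_pos (convex_Icc x0 c)
        · intro x _
          exact ((hderiv t0 x ht0pos hτ0).2.1.continuousAt).continuousWithinAt
        · intro x hx
          rw [interior_Icc] at hx
          rw [(hderiv t0 x ht0pos hτ0).2.1.deriv]
          exact huxpos x ⟨hx.1, by simp [hc] at hx ⊢; linarith [hx.2]⟩
      have := hsm ⟨le_refl x0, hx0c.le⟩ ⟨hx0c.le, le_refl c⟩ hx0c
      exact absurd (hglobal c) (not_le.2 this)
    -- points strictly before t0 are good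
    have hnotA : ∀ t : ℝ, 0 ≤ t → t < t0 → u t x0 < w t := by
      intro t h1 h2
      by_contra hge
      push_neg at hge
      have : t ∈ A := ⟨⟨h1, h2.le.trans ht0mem.2⟩, x0, hx0mem, hge⟩
      exact notMem_of_lt_csInf h2 hAbdd this
    -- equality at the touching time
    have hle : u t0 x0 ≤ w t0 := by
      by_contra hgt
      push_neg at hgt
      have hc1 : ContinuousWithinAt (fun t => u t x0) (Icc 0 t₁) t0 := by
        have h0 := hcont (t0, x0) ⟨⟨ht0pos.le, hτ0⟩, trivial⟩
        have hmap : MapsTo (fun t : ℝ => (t, x0)) (Icc 0 t₁)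
            ({t : ℝ | 0 ≤ t ∧ ENNReal.ofReal t < τ} ×ˢ (Set.univ : Set ℝ)) :=
          fun t ht => ⟨hdom t ht, trivial⟩
        exact ContinuousWithinAt.comp (f := fun t : ℝ => (t, x0)) h0
          ((continuous_id.prodMk continuous_const).continuousWithinAt) hmap
      have hcw : ContinuousWithinAt (fun t => u t x0 - w t) (Icc 0 t₁) t0 :=
        hc1.sub ((by fun_prop : Continuous w).continuousWithinAt)
      have hpos' : ∀ᶠ t in 𝓝[Icc 0 t₁] t0, 0 < u t x0 - w t :=
        hcw.eventually (eventually_gt_nhds (sub_pos.2 hgt))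
      have hpos'' : ∀ᶠ t in 𝓝 t0, t ∈ Icc 0 t₁ → 0 < u t x0 - w t :=
        eventually_nhdsWithin_iff.mp hpos'
      have hIoo : ∀ᶠ t in 𝓝[<] t0, t ∈ Ioo 0 t0 :=
        eventually_mem_set.mpr (Ioo_mem_nhdsLT_of_mem ⟨ht0pos, le_refl t0⟩)
      have hcomb : ∀ᶠ t in 𝓝[<] t0, False := by
        filter_upwards [hIoo, eventually_nhdsWithin_of_eventually_nhds hpos''] with t ht hpt
        have htmem : t ∈ Icc 0 t₁ := ⟨ht.1.le, ht.2.le.trans ht0mem.2⟩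
        have := hnotA t ht.1.le ht.2
        linarith [hpt htmem]
      exact (hcomb.exists).elim (fun _ h => h)
    have hueq : u t0 x0 = w t0 := le_antisymm hle hx0ge
    -- time derivative estimate
    have hwderiv : HasDerivAt w (R * (Real.exp (-ζ * t0) * (-ζ * 1))) t0 := by
      have h1 : HasDerivAt (fun t : ℝ => -ζ * t) (-ζ * 1) t0 := (hasDerivAt_id t0).const_mul (-ζ)
      exact ((h1.exp).const_mul R).const_add (δ + ε)
    have hg : HasDerivAt (fun t => u t x0 - w t)
        (ut t0 x0 - R * (Real.exp (-ζ * t0) * (-ζ * 1))) t0 :=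
      (hderiv t0 x0 ht0pos hτ0).1.sub hwderiv
    have hd0 : 0 ≤ ut t0 x0 - R * (Real.exp (-ζ * t0) * (-ζ * 1)) := by
      have hslope := hasDerivAt_iff_tendsto_slope.mp hg
      have hslope' := hslope.mono_left (nhdsWithin_mono t0 (fun t (ht : t ∈ Iio t0) => ht.ne))
      apply ge_of_tendsto hslope'
      have hIoo : ∀ᶠ t in 𝓝[<] t0, t ∈ Ioo 0 t0 :=
        eventually_mem_set.mpr (Ioo_mem_nhdsLT_of_mem ⟨ht0pos, le_refl t0⟩)
      filter_upwards [hIoo] with t ht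
      rw [slope_def_field]
      have h1 : u t x0 - w t < 0 := sub_neg.2 (hnotA t ht.1.le ht.2)
      have h2 : u t0 x0 - w t0 = 0 := by rw [hueq]; ring
      have h3 : t - t0 < 0 := sub_neg.2 ht.2
      have : 0 < ((u t x0 - w t) - (u t0 x0 - w t0)) / (t - t0) := by
        apply div_pos_of_neg_of_neg _ h3
        linarith
      linarith
    -- the equation gives a contradiction
    have heq0 := heqn t0 x0 ht0pos hτ0
    rw [hux0, hueq] at heq0
    have hE1 : Real.exp (-ζ * t0) ≤ 1 := by
      rw [show (1 : ℝ) = Real.exp 0 by simp]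
      exact Real.exp_le_exp.mpr (by nlinarith)
    have hEpos : 0 < Real.exp (-ζ * t0) := Real.exp_pos _
    have hf0 : f t0 (w t0) 0 ≤ -m := by
      apply hfb
      · simp only [hw]; nlinarith
      · simp only [hw]; nlinarith
    have hut_le : ut t0 x0 ≤ -m := by rw [heq0]; linarith
    nlinarith [mul_le_mul_of_nonneg_left hE1 (mul_nonneg hζpos.le hR)]
  -- pass to the limit ε → 0
  apply _root_.le_of_forall_pos_le_add
  intro ε hε
  set ε' := min ε 1 with hε'
  have hε'0 : 0 < ε' := lt_min hε one_pos
  have h := key ε' hε'0 (min_le_right ε 1) t₁ ⟨ht₁, le_refl t₁⟩ x₁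
  have := min_le_left ε 1
  linarith


/-- Uniform dissipativity estimate for the time-periodic semilinear parabolic equation
`u_t = u_xx + f(t,u,u_x)` on the circle `S¹ = ℝ/2πℤ`: under the sign condition
`y·f(t,y,0) < 0` for `|y| ≥ δ`, every classical solution on `[0,τ)` with
`sup_x |u(0,x)| ≤ δ + R` satisfies `sup_x |u(t,x)| ≤ δ + R e^{-ζ t}` for all `t ∈ [0,τ)`,
with `ζ > 0` depending only on `f`, `δ` and `R`.  The maximal time `τ ∈ (0,∞]` is
modeled as an element of `ℝ≥0∞`, the time domain `[0,τ)` being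
`{t : ℝ | 0 ≤ t ∧ ENNReal.ofReal t < τ}`. -/
theorem dissipativity_estimate
    (T : ℝ) (hT : 0 < T)
    (f : ℝ → ℝ → ℝ → ℝ)
    (hf : ContDiff ℝ 2 fun p : ℝ × ℝ × ℝ => f p.1 p.2.1 p.2.2)
    (hfper : ∀ t y z : ℝ, f (t + T) y z = f t y z)
    (δ : ℝ) (hδ : 0 < δ)
    (hsign : ∀ t y : ℝ, δ ≤ |y| → y * f t y 0 < 0) :
    ∀ R : ℝ, 0 ≤ R → ∃ ζ : ℝ, 0 < ζ ∧
      ∀ (τ : ℝ≥0∞), 0 < τ →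
      ∀ u ut ux uxx : ℝ → ℝ → ℝ,
      -- `u` is `2π`-periodic in `x` on the time domain `[0,τ)`
      (∀ t x : ℝ, 0 ≤ t → ENNReal.ofReal t < τ → u t (x + 2 * π) = u t x) →
      -- `u` is continuous on `[0,τ) × ℝ`
      ContinuousOn (fun p : ℝ × ℝ => u p.1 p.2)
        ({t : ℝ | 0 ≤ t ∧ ENNReal.ofReal t < τ} ×ˢ Set.univ) →
      -- `u_t`, `u_x`, `u_xx` exist on `(0,τ) × ℝ`
      (∀ t x : ℝ, 0 < t → ENNReal.ofReal t < τ →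
        HasDerivAt (fun s => u s x) (ut t x) t ∧
        HasDerivAt (fun y => u t y) (ux t x) x ∧
        HasDerivAt (fun y => ux t y) (uxx t x) x) →
      -- and are continuous on `(0,τ) × ℝ`
      ContinuousOn (fun p : ℝ × ℝ => ut p.1 p.2)
        ({t : ℝ | 0 < t ∧ ENNReal.ofReal t < τ} ×ˢ Set.univ) →
      ContinuousOn (fun p : ℝ × ℝ => ux p.1 p.2)
        ({t : ℝ | 0 < t ∧ ENNReal.ofReal t < τ} ×ˢ Set.univ) →
      ContinuousOn (fun p : ℝ × ℝ => uxx p.1 p.2)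
        ({t : ℝ | 0 < t ∧ ENNReal.ofReal t < τ} ×ˢ Set.univ) →
      -- the equation holds on `(0,τ) × ℝ`
      (∀ t x : ℝ, 0 < t → ENNReal.ofReal t < τ →
        ut t x = uxx t x + f t (u t x) (ux t x)) →
      -- initial bound
      (∀ x : ℝ, |u 0 x| ≤ δ + R) →
      -- conclusion: exponential decay towards the ball of radius `δ`
      ∀ t x : ℝ, 0 ≤ t → ENNReal.ofReal t < τ →
        |u t x| ≤ δ + R * Real.exp (-ζ * t) := by
  intro R hR
  -- continuity of (t,y) ↦ f t y 0
  have hgc : Continuous fun p : ℝ × ℝ => f p.1 p.2 0 := by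
    have h1 := hf.continuous
    have h2 : Continuous fun p : ℝ × ℝ => (p.1, p.2, (0 : ℝ)) := by fun_prop
    exact h1.comp h2
  -- uniform negativity on the upper strip
  obtain ⟨p1, hp1K, hp1max⟩ := (isCompact_Icc.prod isCompact_Icc).exists_isMaxOn
    (⟨(0, δ), ⟨⟨le_refl 0, hT.le⟩, ⟨le_refl δ, show (δ:ℝ) ≤ δ + R + 1 by linarith⟩⟩⟩ :
      ((Icc (0:ℝ) T) ×ˢ (Icc δ (δ + R + 1))).Nonempty)
    hgc.continuousOn
  have hm1 : 0 < -(f p1.1 p1.2 0) := by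
    have h1 : δ ≤ p1.2 := hp1K.2.1
    have h2 := hsign p1.1 p1.2 (by rw [abs_of_pos (by linarith)]; exact h1)
    nlinarith
  -- uniform positivity on the lower strip
  obtain ⟨p2, hp2K, hp2min⟩ := (isCompact_Icc.prod isCompact_Icc).exists_isMinOn
    (⟨(0, -δ), ⟨⟨le_refl 0, hT.le⟩, ⟨show -(δ + R + 1) ≤ -δ by linarith,
        le_refl (-δ)⟩⟩⟩ :
      ((Icc (0:ℝ) T) ×ˢ (Icc (-(δ + R + 1)) (-δ))).Nonempty)
    hgc.continuousOn
  have hm2 : 0 < f p2.1 p2.2 0 := by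
    have h1 : p2.2 ≤ -δ := hp2K.2.2
    have h2 := hsign p2.1 p2.2 (by rw [abs_of_neg (by linarith)]; linarith)
    nlinarith
  set m : ℝ := min (-(f p1.1 p1.2 0)) (f p2.1 p2.2 0) with hmdef
  have hm : 0 < m := lt_min hm1 hm2
  have hfb1 : ∀ t y : ℝ, δ ≤ y → y ≤ δ + R + 1 → f t y 0 ≤ -m := by
    intro t y h1 h2
    have hpf : Function.Periodic (fun s => f s y 0) T := fun s => hfper s y 0
    obtain ⟨t', ht', hteq⟩ := hpf.exists_mem_Ico₀ hT t
    have hle : f t' y 0 ≤ f p1.1 p1.2 0 :=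
      hp1max (a := (t', y)) ⟨⟨ht'.1, ht'.2.le⟩, ⟨h1, h2⟩⟩
    have hmin := min_le_left (-(f p1.1 p1.2 0)) (f p2.1 p2.2 0)
    rw [hteq, hmdef]
    linarith
  have hfb2 : ∀ t y : ℝ, δ ≤ y → y ≤ δ + R + 1 → m ≤ f t (-y) 0 := by
    intro t y h1 h2
    have hpf : Function.Periodic (fun s => f s (-y) 0) T := fun s => hfper s (-y) 0
    obtain ⟨t', ht', hteq⟩ := hpf.exists_mem_Ico₀ hT t
    have hle : f p2.1 p2.2 0 ≤ f t' (-y) 0 :=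
      hp2min (a := (t', -y)) ⟨⟨ht'.1, ht'.2.le⟩,
        ⟨show -(δ + R + 1) ≤ -y by linarith, show -y ≤ -δ by linarith⟩⟩
    have hmin := min_le_right (-(f p1.1 p1.2 0)) (f p2.1 p2.2 0)
    rw [hteq, hmdef]
    linarith
  -- the decay rate
  refine ⟨m / (2 * (R + 1)), div_pos hm (by linarith), ?_⟩
  have hζpos : 0 < m / (2 * (R + 1)) := div_pos hm (by linarith)
  have hζR : m / (2 * (R + 1)) * R < m := by
    rw [div_mul_eq_mul_div, div_lt_iff₀ (by linarith : (0:ℝ) < 2 * (R + 1))]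
    nlinarith
  intro τ hτ u ut ux uxx hper hcont hderiv _ _ _ heqn hinit t x ht hτt
  set ζ := m / (2 * (R + 1))
  rw [abs_le]
  constructor
  · -- lower bound: apply the one-sided lemma to -u and the reflected f
    have hlow := onesided_bound (fun t y z => -(f t (-y) (-z))) δ R m ζ hδ hR hm
      (fun t y h1 h2 => by simpa using neg_le_neg (hfb2 t y h1 h2))
      hζpos hζR τ
      (fun t x => -(u t x)) (fun t x => -(ut t x)) (fun t x => -(ux t x))
      (fun t x => -(uxx t x))
      (fun t x h1 h2 => by show -(u t (x + 2 * π)) = -(u t x); rw [hper t x h1 h2])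
      hcont.neg
      (fun t x h1 h2 => ⟨(hderiv t x h1 h2).1.neg, (hderiv t x h1 h2).2.1.neg,
        (hderiv t x h1 h2).2.2.neg⟩)
      (fun t x h1 h2 => by
        show -(ut t x) = -(uxx t x) + -(f t (-(-(u t x))) (-(-(ux t x))))
        simp only [neg_neg]; rw [heqn t x h1 h2]; ring)
      (fun x => by show -(u 0 x) ≤ δ + R; linarith [(abs_le.mp (hinit x)).1])
      t x ht hτt
    linarith [show -(u t x) ≤ δ + R * Real.exp (-ζ * t) from hlow]
  · exact onesided_bound f δ R m ζ hδ hR hm hfb1 hζpos hζR τ u ut ux uxx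
      hper hcont hderiv heqn (fun x => (abs_le.mp (hinit x)).2) t x ht hτt
end
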